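/- arXiv:2406.01849 — 4 statements merged into one kernel-verified Lean document; each statement's English description precedes it below -/
import Mathlib

section
/- Let X be a random variable taking values in {a₁, …, aₙ} with a₁ < ⋯ < aₙ and ℙ(X = aᵢ) > 0 for all i, and let Y be a random variable taking values in {b₁, …, b_m} with b₁ < ⋯ < b_m and ℙ(Y = bⱼ) > 0 for all j. Then X and Y are stochastically independent if and only if for every i ≤ n and j ≤ m, setting U = {X ≤ aᵢ, Y ≤ bⱼ} (which has positive probability), one has E[XY | U] = E[X | U] · E[Y | U]. -/
open MeasureTheory Set
open Finset


lemma inner_lemma (n : ℕ) (a r δ : ℕ → ℝ)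
    (ha : ∀ k l, k < l → l < n → a k < a l)
    (hr : ∀ k, k < n → 0 ≤ r k)
    (hδ : ∀ k, k < n → r k = 0 → 0 ≤ δ k)
    (hsum : ∑ k ∈ range n, δ k = 0)
    (hpos : 0 < ∑ k ∈ range n, r k)
    (heq : ∀ i, i < n →
      (∑ k ∈ range (i+1), a k * r k) * (∑ k ∈ range (i+1), δ k)
        = (∑ k ∈ range (i+1), r k) * (∑ k ∈ range (i+1), a k * δ k)) :
    ∀ k, k < n → δ k = 0 := by
  have K : ∀ i, i < n → ∀ k, k ≤ i →
      (∑ k' ∈ range (i+1), r k') * δ k = (∑ k' ∈ range (i+1), δ k') * r k := by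
    intro i
    induction i with
    | zero =>
      intro _ k hk
      interval_cases k
      rw [Finset.sum_range_one, Finset.sum_range_one]; ring
    | succ i ih =>
      intro hi1 k hk
      have hi : i < n := by omega
      set σ := ∑ k' ∈ range (i+1), r k' with hσ
      set α := ∑ k' ∈ range (i+1), a k' * r k' with hα
      set ε := ∑ k' ∈ range (i+1), δ k' with hε
      set A := ∑ k' ∈ range (i+1), a k' * δ k' with hA
      have hKi := ih hi
      have hdiff : δ (i+1) * (α - a (i+1) * σ) = r (i+1) * (A - a (i+1) * ε) := by
        have h1 := heq i hi
        have h2 := heq (i+1) hi1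
        rw [Finset.sum_range_succ (fun k => a k * r k) (i+1),
          Finset.sum_range_succ δ (i+1), Finset.sum_range_succ r (i+1),
          Finset.sum_range_succ (fun k => a k * δ k) (i+1)] at h2
        rw [← hσ, ← hα, ← hε, ← hA] at h1 h2
        linear_combination h2 - h1
      have hσnonneg : 0 ≤ σ := by
        apply Finset.sum_nonneg
        intro k' hk'
        exact hr k' (by simp at hk'; omega)
      rw [Finset.sum_range_succ r (i+1), Finset.sum_range_succ δ (i+1), ← hσ, ← hε]
      rcases eq_or_lt_of_le hσnonneg with hσ0 | hσpos
      · -- σ = 0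
        have hr0 : ∀ k', k' ≤ i → r k' = 0 := by
          intro k' hk'
          exact (Finset.sum_eq_zero_iff_of_nonneg (fun x hx => hr x (by simp at hx; omega))).1
            hσ0.symm k' (by simp; omega)
        have hδ0 : ∀ k', k' ≤ i → 0 ≤ δ k' := fun k' hk' => hδ k' (by omega) (hr0 k' hk')
        have hα0 : α = 0 := by
          rw [hα]; apply Finset.sum_eq_zero; intro x hx
          rw [hr0 x (by simp at hx; omega)]; ring
        have h0 : r (i+1) * (A - a (i+1) * ε) = 0 := by
          rw [← hdiff, hα0, hσ0.symm]; ring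
        have hAe : A - a (i+1) * ε = ∑ k' ∈ range (i+1), (a k' - a (i+1)) * δ k' := by
          rw [hA, hε, Finset.mul_sum, ← Finset.sum_sub_distrib]
          apply Finset.sum_congr rfl; intro x hx; ring
        have hterm : ∀ k', k' ∈ range (i+1) → r (i+1) * ((a k' - a (i+1)) * δ k') = 0 := by
          have hsum0 : ∑ k' ∈ range (i+1), r (i+1) * ((a k' - a (i+1)) * δ k') = 0 := by
            rw [← Finset.mul_sum, ← hAe, h0]
          have hnp : ∀ k', k' ∈ range (i+1) → r (i+1) * ((a k' - a (i+1)) * δ k') ≤ 0 := by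
            intro k' hk'
            simp only [Finset.mem_range] at hk'
            have h1 : a k' - a (i+1) < 0 := by
              have := ha k' (i+1) (by omega) hi1; linarith
            have h2 : 0 ≤ δ k' := hδ0 k' (by omega)
            have h3 : 0 ≤ r (i+1) := hr (i+1) hi1
            nlinarith [mul_nonneg h3 h2]
          exact fun k' hk' => (Finset.sum_eq_zero_iff_of_nonpos hnp).1 hsum0 k' hk'
        have hrδ : ∀ k', k' ≤ i → r (i+1) * δ k' = 0 := by
          intro k' hk'
          have h1 := hterm k' (by simp; omega)
          have h2 : a k' - a (i+1) < 0 := by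
            have := ha k' (i+1) (by omega) hi1; linarith
          rcases mul_eq_zero.1 h1 with h | h
          · rw [h]; ring
          · rcases mul_eq_zero.1 h with h' | h'
            · exact absurd h' (ne_of_lt h2)
            · rw [h']; ring
        rcases Nat.lt_or_ge k (i+1) with hk' | hk'
        · have h1 := hrδ k (by omega)
          have h2 := hr0 k (by omega)
          linear_combination (-δ k) * hσ0 + h1 - (ε + δ (i+1)) * h2
        · have hk2 : k = i + 1 := by omega
          subst hk2
          have hre : r (i+1) * ε = 0 := by
            rw [hε, Finset.mul_sum]
            exact Finset.sum_eq_zero fun x hx => hrδ x (by simp at hx; omega)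
          linear_combination (-δ (i+1)) * hσ0 - hre
      · -- σ > 0
        have hσA : σ * A = ε * α := by
          rw [hA, hα, Finset.mul_sum, Finset.mul_sum]
          apply Finset.sum_congr rfl
          intro x hx
          simp only [Finset.mem_range] at hx
          have h := hKi x (by omega)
          linear_combination a x * h
        have hneg : α - a (i+1) * σ < 0 := by
          have hrewrite : α - a (i+1) * σ = ∑ k' ∈ range (i+1), (a k' - a (i+1)) * r k' := by
            rw [hα, hσ, Finset.mul_sum, ← Finset.sum_sub_distrib]
            apply Finset.sum_congr rfl; intro x hx; ring
          rw [hrewrite]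
          have hex : ∃ k₀ ∈ range (i+1), 0 < r k₀ := by
            by_contra hno
            push_neg at hno
            have : σ ≤ 0 := by
              rw [hσ]; exact Finset.sum_nonpos fun x hx => hno x hx
            linarith
          obtain ⟨k₀, hk₀, hk₀pos⟩ := hex
          have hlt : ∑ k' ∈ range (i+1), (a k' - a (i+1)) * r k'
              < ∑ k' ∈ range (i+1), (0:ℝ) := by
            apply Finset.sum_lt_sum
            · intro x hx
              simp only [Finset.mem_range] at hx
              have h1 : a x - a (i+1) < 0 := by
                have := ha x (i+1) (by omega) hi1; linarith
              have h2 : 0 ≤ r x := hr x (by omega)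
              nlinarith
            · refine ⟨k₀, hk₀, ?_⟩
              simp only [Finset.mem_range] at hk₀
              have h1 : a k₀ - a (i+1) < 0 := by
                have := ha k₀ (i+1) (by omega) hi1; linarith
              nlinarith
          simpa using hlt
        have hkey : σ * δ (i+1) = ε * r (i+1) := by
          have h2 : (α - a (i+1) * σ) * (σ * δ (i+1) - ε * r (i+1)) = 0 := by
            linear_combination σ * hdiff + r (i+1) * hσA
          rcases mul_eq_zero.1 h2 with h | h
          · exact absurd h (ne_of_lt hneg)
          · linarith
        rcases Nat.lt_or_ge k (i+1) with hk' | hk'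
        · have h1 := hKi k (by omega)
          have h2 : σ * (r (i+1) * δ k) = σ * (δ (i+1) * r k) := by
            linear_combination r (i+1) * h1 - r k * hkey
          have h3 : r (i+1) * δ k = δ (i+1) * r k :=
            mul_left_cancel₀ (ne_of_gt hσpos) h2
          linear_combination h1 + h3
        · have hk2 : k = i + 1 := by omega
          subst hk2
          linear_combination hkey
  intro k hk
  have hn1 : n - 1 < n := by omega
  have hK := K (n-1) hn1 k (by omega)
  have h1 : n - 1 + 1 = n := by omega
  rw [h1, hsum] at hK
  have h2 := mul_eq_zero.1 (by linarith [hK] : (∑ k' ∈ range n, r k') * δ k = 0)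
  rcases h2 with h | h
  · exact absurd h (ne_of_gt hpos)
  · exact h

lemma core_lemma (n : ℕ) (a : ℕ → ℝ) (ha : ∀ k l, k < l → l < n → a k < a l) :
    ∀ m : ℕ, ∀ b : ℕ → ℝ, (∀ k l, k < l → l < m → b k < b l) →
    ∀ p : ℕ → ℕ → ℝ, (∀ k l, 0 ≤ p k l) →
    (∀ l, l < m → 0 < ∑ k ∈ range n, p k l) →
    (∀ i, i < n → ∀ j, j < m →
      (∑ k ∈ range (i+1), ∑ l ∈ range (j+1), (a k * b l) * p k l) *
      (∑ k ∈ range (i+1), ∑ l ∈ range (j+1), p k l) =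
      (∑ k ∈ range (i+1), ∑ l ∈ range (j+1), a k * p k l) *
      (∑ k ∈ range (i+1), ∑ l ∈ range (j+1), b l * p k l)) →
    ∀ k, k < n → ∀ l, l < m →
      (∑ k' ∈ range n, ∑ l' ∈ range m, p k' l') * p k l
        = (∑ l' ∈ range m, p k l') * (∑ k' ∈ range n, p k' l) := by
  intro m
  induction m with
  | zero => intro _ _ _ _ _ _ _ _ l hl; omega
  | succ m ih =>
    intro b hb p hp hcol hcond k hk l hl
    rcases Nat.eq_zero_or_pos m with hm0 | hm1
    · -- single column
      subst hm0
      have hl0 : l = 0 := by omega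
      subst hl0
      simp only [zero_add, Finset.sum_range_one]
      ring
    · -- main step
      -- abbreviations
      obtain ⟨r', hr'⟩ : ∃ f : ℕ → ℝ, ∀ k, f k = ∑ l' ∈ range m, p k l' :=
        ⟨_, fun _ => rfl⟩
      obtain ⟨c, hc⟩ : ∃ f : ℕ → ℝ, ∀ l, f l = ∑ k' ∈ range n, p k' l :=
        ⟨_, fun _ => rfl⟩
      obtain ⟨T', hT'⟩ : ∃ t : ℝ, t = ∑ k' ∈ range n, r' k' := ⟨_, rfl⟩
      obtain ⟨cs, hcs⟩ : ∃ t : ℝ, t = c m := ⟨_, rfl⟩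
      obtain ⟨δ, hδ⟩ : ∃ f : ℕ → ℝ, ∀ k, f k = T' * p k m - cs * r' k :=
        ⟨_, fun _ => rfl⟩
      -- induction hypothesis: factorization of the first m columns
      have IH : ∀ k, k < n → ∀ l, l < m → T' * p k l = r' k * c l := by
        have h := ih b (fun k l hkl hl' => hb k l hkl (by omega)) p hp
          (fun l' hl' => hcol l' (by omega))
          (fun i hi j hj => hcond i hi j (by omega))
        intro k hk l hl
        have h2 := h k hk l hl
        rw [hT', hr' , hc]
        have hrr : ∑ k' ∈ range n, r' k' = ∑ k' ∈ range n, ∑ l' ∈ range m, p k' l' :=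
          Finset.sum_congr rfl fun x _ => hr' x
        rw [hrr]
        exact h2
      -- positivity of T'
      have hT'c : T' = ∑ l' ∈ range m, c l' := by
        rw [hT']
        rw [show (∑ k' ∈ range n, r' k') = ∑ k' ∈ range n, ∑ l' ∈ range m, p k' l' from
          Finset.sum_congr rfl fun x _ => hr' x]
        rw [Finset.sum_comm]
        exact Finset.sum_congr rfl fun x _ => (hc x).symm
      have hcpos : ∀ l', l' < m → 0 < c l' := by
        intro l' hl'
        rw [hc]; exact hcol l' (by omega)
      have hT'pos : 0 < T' := by
        rw [hT'c]
        apply Finset.sum_pos (fun x hx => hcpos x (by simpa using hx))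
        exact ⟨0, by simpa using hm1⟩
      -- β
      obtain ⟨β, hβ⟩ : ∃ t : ℝ, t = (∑ l' ∈ range m, b l' * c l') + b m * cs := ⟨_, rfl⟩
      -- the four identities and heq for the inner lemma
      have heqi : ∀ i, i < n →
          (∑ k' ∈ range (i+1), a k' * r' k') * (∑ k' ∈ range (i+1), δ k')
            = (∑ k' ∈ range (i+1), r' k') * (∑ k' ∈ range (i+1), a k' * δ k') := by
        intro i hi
        have hcnd := hcond i hi m (by omega)
        -- per-row identities
        have hrow : ∀ x, x < n → T' * (∑ l' ∈ range (m+1), p x l')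
            = (T' + cs) * r' x + δ x := by
          intro x hx
          rw [Finset.sum_range_succ, hδ, hr']
          ring
        have hrowA : ∀ x, x < n → T' * (∑ l' ∈ range (m+1), a x * p x l')
            = a x * ((T' + cs) * r' x + δ x) := by
          intro x hx
          rw [Finset.sum_range_succ, ← Finset.mul_sum, hδ, hr']
          ring
        have hrowC : ∀ x, x < n → T' * (∑ l' ∈ range (m+1), b l' * p x l')
            = β * r' x + b m * δ x := by
          intro x hx
          rw [Finset.sum_range_succ]
          have h1 : T' * (∑ l' ∈ range m, b l' * p x l')
              = (∑ l' ∈ range m, b l' * c l') * r' x := by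
            rw [Finset.mul_sum, Finset.sum_mul]
            apply Finset.sum_congr rfl
            intro l' hl'
            have := IH x hx l' (by simpa using hl')
            linear_combination b l' * this
          have h2 : T' * ((∑ l' ∈ range m, b l' * p x l') + b m * p x m)
              = (∑ l' ∈ range m, b l' * c l') * r' x + b m * (T' * p x m) := by
            rw [mul_add, h1]; ring
          rw [h2, hβ, hδ]
          ring
        have hrowB : ∀ x, x < n → T' * (∑ l' ∈ range (m+1), (a x * b l') * p x l')
            = a x * (β * r' x + b m * δ x) := by
          intro x hx
          have h0 : (∑ l' ∈ range (m+1), (a x * b l') * p x l')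
              = a x * (∑ l' ∈ range (m+1), b l' * p x l') := by
            rw [Finset.mul_sum]
            apply Finset.sum_congr rfl
            intro l' _
            ring
          rw [h0, ← mul_assoc, mul_comm T' (a x), mul_assoc, hrowC x hx]
        -- assemble
        have hSS : T' * (∑ k' ∈ range (i+1), ∑ l' ∈ range (m+1), p k' l')
            = (T' + cs) * (∑ k' ∈ range (i+1), r' k') + (∑ k' ∈ range (i+1), δ k') := by
          rw [Finset.mul_sum]
          rw [Finset.sum_congr rfl (fun x hx => hrow x (by simp at hx; omega))]
          rw [Finset.sum_add_distrib, ← Finset.mul_sum]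
        have hSB : T' * (∑ k' ∈ range (i+1), ∑ l' ∈ range (m+1), a k' * p k' l')
            = (T' + cs) * (∑ k' ∈ range (i+1), a k' * r' k')
              + (∑ k' ∈ range (i+1), a k' * δ k') := by
          rw [Finset.mul_sum]
          rw [Finset.sum_congr rfl (fun x hx => hrowA x (by simp at hx; omega))]
          rw [show (∑ x ∈ range (i+1), a x * ((T' + cs) * r' x + δ x))
              = ∑ x ∈ range (i+1), ((T' + cs) * (a x * r' x) + a x * δ x) from
            Finset.sum_congr rfl fun x _ => by ring]
          rw [Finset.sum_add_distrib, ← Finset.mul_sum]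
        have hSC : T' * (∑ k' ∈ range (i+1), ∑ l' ∈ range (m+1), b l' * p k' l')
            = β * (∑ k' ∈ range (i+1), r' k') + b m * (∑ k' ∈ range (i+1), δ k') := by
          rw [Finset.mul_sum]
          rw [Finset.sum_congr rfl (fun x hx => hrowC x (by simp at hx; omega))]
          rw [Finset.sum_add_distrib, ← Finset.mul_sum, ← Finset.mul_sum]
        have hSA : T' * (∑ k' ∈ range (i+1), ∑ l' ∈ range (m+1), (a k' * b l') * p k' l')
            = β * (∑ k' ∈ range (i+1), a k' * r' k')
              + b m * (∑ k' ∈ range (i+1), a k' * δ k') := by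
          rw [Finset.mul_sum]
          rw [Finset.sum_congr rfl (fun x hx => hrowB x (by simp at hx; omega))]
          rw [show (∑ x ∈ range (i+1), a x * (β * r' x + b m * δ x))
              = ∑ x ∈ range (i+1), (β * (a x * r' x) + b m * (a x * δ x)) from
            Finset.sum_congr rfl fun x _ => by ring]
          rw [Finset.sum_add_distrib, ← Finset.mul_sum, ← Finset.mul_sum]
        -- the product equation, multiplied by T'^2
        have e1 : (β * (∑ k' ∈ range (i+1), a k' * r' k')
              + b m * (∑ k' ∈ range (i+1), a k' * δ k'))
            * ((T' + cs) * (∑ k' ∈ range (i+1), r' k') + (∑ k' ∈ range (i+1), δ k'))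
            = ((T' + cs) * (∑ k' ∈ range (i+1), a k' * r' k')
              + (∑ k' ∈ range (i+1), a k' * δ k'))
            * (β * (∑ k' ∈ range (i+1), r' k') + b m * (∑ k' ∈ range (i+1), δ k')) := by
          rw [← hSA, ← hSS, ← hSB, ← hSC]
          linear_combination T' * T' * hcnd
        -- β - b m * (T' + cs) < 0
        have hβneg : β - b m * (T' + cs) < 0 := by
          have hre : β - b m * (T' + cs) = ∑ l' ∈ range m, (b l' - b m) * c l' := by
            rw [hβ, hT'c]
            rw [Finset.sum_congr rfl (fun x _ => (by ring :
              (b x - b m) * c x = b x * c x - b m * c x))]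
            rw [Finset.sum_sub_distrib, ← Finset.mul_sum]
            ring
          rw [hre]
          have hlt : ∑ l' ∈ range m, (b l' - b m) * c l' < ∑ l' ∈ range m, (0:ℝ) := by
            apply Finset.sum_lt_sum
            · intro x hx
              simp only [Finset.mem_range] at hx
              have h1 : b x - b m < 0 := by
                have := hb x m hx (by omega); linarith
              nlinarith [hcpos x hx]
            · refine ⟨0, by simpa using hm1, ?_⟩
              have h1 : b 0 - b m < 0 := by
                have := hb 0 m hm1 (by omega); linarith
              nlinarith [hcpos 0 hm1]
          simpa using hlt
        -- extract
        have e2 : (β - b m * (T' + cs)) *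
            ((∑ k' ∈ range (i+1), a k' * r' k') * (∑ k' ∈ range (i+1), δ k')
              - (∑ k' ∈ range (i+1), r' k') * (∑ k' ∈ range (i+1), a k' * δ k')) = 0 := by
          linear_combination e1
        rcases mul_eq_zero.1 e2 with h | h
        · exact absurd h (ne_of_lt hβneg)
        · linarith
      -- apply the inner lemma
      have hδ0 : ∀ x, x < n → δ x = 0 := by
        apply inner_lemma n a r' δ ha
        · intro x hx
          rw [hr']
          exact Finset.sum_nonneg fun _ _ => hp _ _
        · intro x hx hrx
          rw [hδ, hrx]
          have : 0 ≤ p x m := hp x m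
          nlinarith [hT'pos]
        · rw [Finset.sum_congr rfl (fun x _ => hδ x)]
          rw [Finset.sum_sub_distrib, ← Finset.mul_sum, ← Finset.mul_sum]
          rw [← hT', hcs, hc]
          ring
        · rw [← hT']; exact hT'pos
        · exact heqi
      have hfact : ∀ x, x < n → T' * p x m = cs * r' x := by
        intro x hx
        have := hδ0 x hx
        rw [hδ] at this
        linarith
      -- final conclusion
      have hTot : (∑ k' ∈ range n, ∑ l' ∈ range (m+1), p k' l') = T' + cs := by
        rw [Finset.sum_congr rfl (fun x _ => Finset.sum_range_succ (p x) m)]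
        rw [Finset.sum_add_distrib, hT', hcs, hc]
        rw [Finset.sum_congr rfl (fun x _ => (hr' x).symm)]
      have hRow : (∑ l' ∈ range (m+1), p k l') = r' k + p k m := by
        rw [Finset.sum_range_succ, hr']
      rw [hTot, hRow]
      rcases Nat.lt_or_ge l m with hlm | hlm
      · -- l < m
        have hIHkl := IH k hk l hlm
        have hfk := hfact k hk
        have hcl : (∑ k' ∈ range n, p k' l) = c l := (hc l).symm
        rw [hcl]
        have hmain : T' * ((T' + cs) * p k l) = T' * ((r' k + p k m) * c l) := by
          linear_combination (T' + cs) * hIHkl - c l * hfk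
        exact mul_left_cancel₀ (ne_of_gt hT'pos) hmain
      · -- l = m
        have hlm2 : l = m := by omega
        rw [hlm2]
        have hfk := hfact k hk
        have hcm : (∑ k' ∈ range n, p k' m) = cs := by rw [hcs, hc]
        rw [hcm]
        have hmain : T' * ((T' + cs) * p k m) = T' * ((r' k + p k m) * cs) := by
          linear_combination T' * hfk
        exact mul_left_cancel₀ (ne_of_gt hT'pos) hmain


lemma int_helper {Ω : Type*} [MeasurableSpace Ω] (P : Measure Ω) [IsFiniteMeasure P]
    {ι : Type*} [DecidableEq ι] (s : Finset ι) (G : ι → Set Ω)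
    (hG : ∀ t ∈ s, MeasurableSet (G t))
    (hdisj : ∀ t ∈ s, ∀ t' ∈ s, t ≠ t' → Disjoint (G t) (G t'))
    (Z : Ω → ℝ) (c : ι → ℝ) (hc : ∀ t ∈ s, ∀ ω ∈ G t, Z ω = c t)
    (U : Set Ω) (hU : U = ⋃ t ∈ s, G t) :
    ∫ ω in U, Z ω ∂P = ∑ t ∈ s, c t * (P (G t)).toReal := by
  have hUmeas : MeasurableSet U := by
    rw [hU]; exact s.measurableSet_biUnion hG
  rw [← MeasureTheory.integral_indicator hUmeas]
  have hind : U.indicator Z = fun ω => ∑ t ∈ s, (G t).indicator (fun _ => c t) ω := by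
    funext ω
    by_cases hω : ω ∈ U
    · obtain ⟨t₀, ht₀s, ht₀⟩ : ∃ t₀ ∈ s, ω ∈ G t₀ := by
        rw [hU] at hω; simpa using hω
      rw [Set.indicator_of_mem hω]
      rw [Finset.sum_eq_single t₀]
      · rw [Set.indicator_of_mem ht₀]
        exact hc t₀ ht₀s ω ht₀
      · intro t hts hne
        apply Set.indicator_of_notMem
        intro hmem
        exact (Set.disjoint_left.1 (hdisj t hts t₀ ht₀s hne)) hmem ht₀
      · intro h; exact absurd ht₀s h
    · rw [Set.indicator_of_notMem hω]
      symm
      apply Finset.sum_eq_zero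
      intro t hts
      apply Set.indicator_of_notMem
      intro hmem
      exact hω (by rw [hU]; exact Set.mem_biUnion hts hmem)
  rw [hind]
  rw [MeasureTheory.integral_finset_sum]
  · apply Finset.sum_congr rfl
    intro t hts
    rw [MeasureTheory.integral_indicator_const (c t) (hG t hts)]
    simp [mul_comm, measureReal_def]
  · intro t hts
    exact (integrable_const (c t)).indicator (hG t hts)

lemma measure_helper {Ω : Type*} [MeasurableSpace Ω] (P : Measure Ω) [IsFiniteMeasure P]
    {ι : Type*} [DecidableEq ι] (s : Finset ι) (G : ι → Set Ω)
    (hG : ∀ t ∈ s, MeasurableSet (G t))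
    (hdisj : ∀ t ∈ s, ∀ t' ∈ s, t ≠ t' → Disjoint (G t) (G t'))
    (U : Set Ω) (hU : U = ⋃ t ∈ s, G t) :
    (P U).toReal = ∑ t ∈ s, (P (G t)).toReal := by
  have h := int_helper P s G hG hdisj (fun _ => (1:ℝ)) (fun _ => (1:ℝ))
    (fun _ _ _ _ => rfl) U hU
  rw [MeasureTheory.setIntegral_const] at h
  simpa [measureReal_def] using h



/-- Conditional expectation of `Z` given the event `U`: `E[Z·1_U] / ℙ(U)`. -/
noncomputable def cexp {Ω : Type*} [MeasurableSpace Ω] (P : Measure Ω) (U : Set Ω)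
    (Z : Ω → ℝ) : ℝ :=
  (∫ ω in U, Z ω ∂P) / (P U).toReal

theorem stmt_14 {Ω : Type*} [MeasurableSpace Ω] (P : Measure Ω) [IsProbabilityMeasure P]
    (X Y : Ω → ℝ) (hX : Measurable X) (hY : Measurable Y)
    {n m : ℕ} (a : Fin n → ℝ) (b : Fin m → ℝ) (ha : StrictMono a) (hb : StrictMono b)
    (hXval : ∀ ω, ∃ i, X ω = a i) (hXpos : ∀ i, 0 < P {ω | X ω = a i})
    (hYval : ∀ ω, ∃ j, Y ω = b j) (hYpos : ∀ j, 0 < P {ω | Y ω = b j}) :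
    (∀ A B : Set ℝ, MeasurableSet A → MeasurableSet B →
      P ({ω | X ω ∈ A} ∩ {ω | Y ω ∈ B}) = P {ω | X ω ∈ A} * P {ω | Y ω ∈ B}) ↔
    ∀ i : Fin n, ∀ j : Fin m,
      0 < P {ω | X ω ≤ a i ∧ Y ω ≤ b j} ∧
      cexp P {ω | X ω ≤ a i ∧ Y ω ≤ b j} (fun ω => X ω * Y ω)
        = cexp P {ω | X ω ≤ a i ∧ Y ω ≤ b j} X
          * cexp P {ω | X ω ≤ a i ∧ Y ω ≤ b j} Y := by

  classical
  obtain ⟨E, hE⟩ : ∃ E : ℕ → Set Ω, ∀ k, E k = if h : k < n then {ω | X ω = a ⟨k, h⟩} else ∅ :=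
    ⟨_, fun _ => rfl⟩
  obtain ⟨F, hF⟩ : ∃ F : ℕ → Set Ω, ∀ l, F l = if h : l < m then {ω | Y ω = b ⟨l, h⟩} else ∅ :=
    ⟨_, fun _ => rfl⟩
  obtain ⟨a', ha'⟩ : ∃ f : ℕ → ℝ, ∀ k, f k = if h : k < n then a ⟨k, h⟩ else 0 :=
    ⟨_, fun _ => rfl⟩
  obtain ⟨b', hb'⟩ : ∃ f : ℕ → ℝ, ∀ l, f l = if h : l < m then b ⟨l, h⟩ else 0 :=
    ⟨_, fun _ => rfl⟩
  obtain ⟨p, hp⟩ : ∃ p : ℕ → ℕ → ℝ, ∀ k l, p k l = (P (E k ∩ F l)).toReal :=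
    ⟨_, fun _ _ => rfl⟩
  have hEmeas : ∀ k, MeasurableSet (E k) := by
    intro k; rw [hE]
    split_ifs with h
    · exact hX (measurableSet_singleton _)
    · exact MeasurableSet.empty
  have hFmeas : ∀ l, MeasurableSet (F l) := by
    intro l; rw [hF]
    split_ifs with h
    · exact hY (measurableSet_singleton _)
    · exact MeasurableSet.empty
  have hEmem : ∀ (k : ℕ) (hk : k < n) (ω : Ω), ω ∈ E k ↔ X ω = a ⟨k, hk⟩ := by
    intro k hk ω; rw [hE, dif_pos hk]; rfl
  have hFmem : ∀ (l : ℕ) (hl : l < m) (ω : Ω), ω ∈ F l ↔ Y ω = b ⟨l, hl⟩ := by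
    intro l hl ω; rw [hF, dif_pos hl]; rfl
  have hEempty : ∀ k, n ≤ k → E k = ∅ := by
    intro k hk; rw [hE, dif_neg (by omega)]
  have hFempty : ∀ l, m ≤ l → F l = ∅ := by
    intro l hl; rw [hF, dif_neg (by omega)]
  have hEdisj : ∀ k k', k ≠ k' → Disjoint (E k) (E k') := by
    intro k k' hne
    rw [Set.disjoint_left]
    intro ω hωk hωk'
    rcases Nat.lt_or_ge k n with hk | hk
    · rcases Nat.lt_or_ge k' n with hk' | hk'
      · have h1 := (hEmem k hk ω).1 hωk
        have h2 := (hEmem k' hk' ω).1 hωk'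
        have h3 : (⟨k, hk⟩ : Fin n) = ⟨k', hk'⟩ := ha.injective (h1.symm.trans h2)
        exact hne (by simpa using congrArg Fin.val h3)
      · rw [hEempty k' hk'] at hωk'; exact hωk'
    · rw [hEempty k hk] at hωk; exact hωk
  have hFdisj : ∀ l l', l ≠ l' → Disjoint (F l) (F l') := by
    intro l l' hne
    rw [Set.disjoint_left]
    intro ω hωl hωl'
    rcases Nat.lt_or_ge l m with hl | hl
    · rcases Nat.lt_or_ge l' m with hl' | hl'
      · have h1 := (hFmem l hl ω).1 hωl
        have h2 := (hFmem l' hl' ω).1 hωl'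
        have h3 : (⟨l, hl⟩ : Fin m) = ⟨l', hl'⟩ := hb.injective (h1.symm.trans h2)
        exact hne (by simpa using congrArg Fin.val h3)
      · rw [hFempty l' hl'] at hωl'; exact hωl'
    · rw [hFempty l hl] at hωl; exact hωl
  have hGdisj : ∀ t t' : ℕ × ℕ, t ≠ t' →
      Disjoint (E t.1 ∩ F t.2) (E t'.1 ∩ F t'.2) := by
    intro t t' hne
    by_cases h1 : t.1 = t'.1
    · have h2 : t.2 ≠ t'.2 := fun h => hne (Prod.ext h1 h)
      exact Disjoint.mono Set.inter_subset_right Set.inter_subset_right (hFdisj _ _ h2)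
    · exact Disjoint.mono Set.inter_subset_left Set.inter_subset_left (hEdisj _ _ h1)
  -- rectangle decomposition
  have hUeq : ∀ (i : Fin n) (j : Fin m),
      {ω | X ω ≤ a i ∧ Y ω ≤ b j}
        = ⋃ t ∈ (range (i.1+1) ×ˢ range (j.1+1)), E t.1 ∩ F t.2 := by
    intro i j
    ext ω
    simp only [Set.mem_setOf_eq, Set.mem_iUnion, Finset.mem_product, Finset.mem_range,
      Set.mem_inter_iff, exists_prop]
    constructor
    · rintro ⟨hxi, hyj⟩
      obtain ⟨k, hk⟩ := hXval ω
      obtain ⟨l, hl⟩ := hYval ω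
      have hki : (k : ℕ) ≤ (i : ℕ) := ha.le_iff_le.1 (by rw [← hk]; exact hxi)
      have hlj : (l : ℕ) ≤ (j : ℕ) := hb.le_iff_le.1 (by rw [← hl]; exact hyj)
      refine ⟨(k.1, l.1), ⟨by omega, by omega⟩, ?_, ?_⟩
      · exact (hEmem k.1 k.isLt ω).2 (by rw [Fin.eta]; exact hk)
      · exact (hFmem l.1 l.isLt ω).2 (by rw [Fin.eta]; exact hl)
    · rintro ⟨⟨k, l⟩, ⟨hk1, hl1⟩, hωE, hωF⟩
      have hin : (i : ℕ) < n := i.isLt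
      have hjm : (j : ℕ) < m := j.isLt
      have hkn : k < n := by omega
      have hlm : l < m := by omega
      have hx := (hEmem k hkn ω).1 hωE
      have hy := (hFmem l hlm ω).1 hωF
      constructor
      · rw [hx]
        exact ha.monotone (by simp [Fin.le_def]; omega)
      · rw [hy]
        exact hb.monotone (by simp [Fin.le_def]; omega)
  -- covers
  have hRowCover : ∀ k, E k = ⋃ l ∈ range m, E k ∩ F l := by
    intro k; ext ω
    simp only [Set.mem_iUnion, Finset.mem_range, Set.mem_inter_iff, exists_prop]
    constructor
    · intro hω
      obtain ⟨l, hl⟩ := hYval ω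
      exact ⟨l.1, l.isLt, hω, (hFmem l.1 l.isLt ω).2 (by rw [Fin.eta]; exact hl)⟩
    · rintro ⟨l, _, hω, _⟩; exact hω
  have hColCover : ∀ l, F l = ⋃ k ∈ range n, E k ∩ F l := by
    intro l; ext ω
    simp only [Set.mem_iUnion, Finset.mem_range, Set.mem_inter_iff, exists_prop]
    constructor
    · intro hω
      obtain ⟨k, hk⟩ := hXval ω
      exact ⟨k.1, k.isLt, (hEmem k.1 k.isLt ω).2 (by rw [Fin.eta]; exact hk), hω⟩
    · rintro ⟨k, _, _, hω⟩; exact hω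
  have hUnivCover : (univ : Set Ω) = ⋃ t ∈ (range n ×ˢ range m), E t.1 ∩ F t.2 := by
    ext ω
    simp only [Set.mem_univ, true_iff, Set.mem_iUnion, Finset.mem_product, Finset.mem_range,
      Set.mem_inter_iff, exists_prop]
    obtain ⟨k, hk⟩ := hXval ω
    obtain ⟨l, hl⟩ := hYval ω
    exact ⟨(k.1, l.1), ⟨k.isLt, l.isLt⟩,
      (hEmem k.1 k.isLt ω).2 (by rw [Fin.eta]; exact hk),
      (hFmem l.1 l.isLt ω).2 (by rw [Fin.eta]; exact hl)⟩
  -- sums of the matrix p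
  have hrowsum : ∀ k, (P (E k)).toReal = ∑ l ∈ range m, p k l := by
    intro k
    have h := measure_helper P (range m) (fun l => E k ∩ F l)
      (fun l _ => (hEmeas k).inter (hFmeas l))
      (fun l _ l' _ hne =>
        Disjoint.mono Set.inter_subset_right Set.inter_subset_right (hFdisj l l' hne))
      (E k) (hRowCover k)
    rw [h]
    exact Finset.sum_congr rfl fun l _ => (hp k l).symm
  have hcolsum : ∀ l, (P (F l)).toReal = ∑ k ∈ range n, p k l := by
    intro l
    have h := measure_helper P (range n) (fun k => E k ∩ F l)
      (fun k _ => (hEmeas k).inter (hFmeas l))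
      (fun k _ k' _ hne =>
        Disjoint.mono Set.inter_subset_left Set.inter_subset_left (hEdisj k k' hne))
      (F l) (hColCover l)
    rw [h]
    exact Finset.sum_congr rfl fun k _ => (hp k l).symm
  have htot : ∑ k ∈ range n, ∑ l ∈ range m, p k l = 1 := by
    have h := measure_helper P (range n ×ˢ range m) (fun t => E t.1 ∩ F t.2)
      (fun t _ => (hEmeas t.1).inter (hFmeas t.2))
      (fun t _ t' _ hne => hGdisj t t' hne)
      univ hUnivCover
    have h2 : ∑ t ∈ (range n ×ˢ range m), (P (E t.1 ∩ F t.2)).toReal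
        = ∑ k ∈ range n, ∑ l ∈ range m, p k l := by
      rw [Finset.sum_product]
      exact Finset.sum_congr rfl fun k _ => Finset.sum_congr rfl fun l _ => (hp k l).symm
    rw [h2] at h
    rw [← h, measure_univ, ENNReal.toReal_one]
  -- integral identities
  have hints : ∀ (i : Fin n) (j : Fin m),
      (∫ ω in {ω | X ω ≤ a i ∧ Y ω ≤ b j}, (X ω * Y ω) ∂P
          = ∑ k ∈ range (i.1+1), ∑ l ∈ range (j.1+1), (a' k * b' l) * p k l)
      ∧ (∫ ω in {ω | X ω ≤ a i ∧ Y ω ≤ b j}, X ω ∂P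
          = ∑ k ∈ range (i.1+1), ∑ l ∈ range (j.1+1), a' k * p k l)
      ∧ (∫ ω in {ω | X ω ≤ a i ∧ Y ω ≤ b j}, Y ω ∂P
          = ∑ k ∈ range (i.1+1), ∑ l ∈ range (j.1+1), b' l * p k l)
      ∧ ((P {ω | X ω ≤ a i ∧ Y ω ≤ b j}).toReal
          = ∑ k ∈ range (i.1+1), ∑ l ∈ range (j.1+1), p k l) := by
    intro i j
    have hsub : ∀ t : ℕ × ℕ, t ∈ range (i.1+1) ×ˢ range (j.1+1) → t.1 < n ∧ t.2 < m := by
      intro t ht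
      rw [Finset.mem_product, Finset.mem_range, Finset.mem_range] at ht
      exact ⟨by have := i.isLt; omega, by have := j.isLt; omega⟩
    have hvalX : ∀ t : ℕ × ℕ, t ∈ range (i.1+1) ×ˢ range (j.1+1) →
        ∀ ω ∈ E t.1 ∩ F t.2, X ω = a' t.1 := by
      intro t ht ω hω
      obtain ⟨h1, _⟩ := hsub t ht
      rw [ha', dif_pos h1]
      exact (hEmem t.1 h1 ω).1 hω.1
    have hvalY : ∀ t : ℕ × ℕ, t ∈ range (i.1+1) ×ˢ range (j.1+1) →
        ∀ ω ∈ E t.1 ∩ F t.2, Y ω = b' t.2 := by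
      intro t ht ω hω
      obtain ⟨_, h2⟩ := hsub t ht
      rw [hb', dif_pos h2]
      exact (hFmem t.2 h2 ω).1 hω.2
    have hGm : ∀ t : ℕ × ℕ, t ∈ range (i.1+1) ×ˢ range (j.1+1) →
        MeasurableSet (E t.1 ∩ F t.2) := fun t _ => (hEmeas t.1).inter (hFmeas t.2)
    have hGd : ∀ t ∈ range (i.1+1) ×ˢ range (j.1+1), ∀ t' ∈ range (i.1+1) ×ˢ range (j.1+1),
        t ≠ t' → Disjoint (E t.1 ∩ F t.2) (E t'.1 ∩ F t'.2) :=
      fun t _ t' _ hne => hGdisj t t' hne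
    refine ⟨?_, ?_, ?_, ?_⟩
    · rw [int_helper P (range (i.1+1) ×ˢ range (j.1+1)) (fun t => E t.1 ∩ F t.2) hGm hGd
        (fun ω => X ω * Y ω) (fun t => a' t.1 * b' t.2)
        (fun t ht ω hω => by
          show X ω * Y ω = a' t.1 * b' t.2
          rw [hvalX t ht ω hω, hvalY t ht ω hω]) _ (hUeq i j)]
      rw [Finset.sum_product]
      exact Finset.sum_congr rfl fun k _ => Finset.sum_congr rfl fun l _ => by rw [hp]
    · rw [int_helper P (range (i.1+1) ×ˢ range (j.1+1)) (fun t => E t.1 ∩ F t.2) hGm hGd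
        X (fun t => a' t.1) (fun t ht ω hω => hvalX t ht ω hω) _ (hUeq i j)]
      rw [Finset.sum_product]
      exact Finset.sum_congr rfl fun k _ => Finset.sum_congr rfl fun l _ => by rw [hp]
    · rw [int_helper P (range (i.1+1) ×ˢ range (j.1+1)) (fun t => E t.1 ∩ F t.2) hGm hGd
        Y (fun t => b' t.2) (fun t ht ω hω => hvalY t ht ω hω) _ (hUeq i j)]
      rw [Finset.sum_product]
      exact Finset.sum_congr rfl fun k _ => Finset.sum_congr rfl fun l _ => by rw [hp]
    · rw [measure_helper P (range (i.1+1) ×ˢ range (j.1+1)) (fun t => E t.1 ∩ F t.2) hGm hGd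
        _ (hUeq i j)]
      rw [Finset.sum_product]
      exact Finset.sum_congr rfl fun k _ => Finset.sum_congr rfl fun l _ => (hp k l).symm
  constructor
  · -- independence implies the conditional expectation property
    intro hInd i j
    have hkey : ∀ k l (hk : k < n) (hl : l < m), P (E k ∩ F l) = P (E k) * P (F l) := by
      intro k l hk hl
      have h := hInd {a ⟨k, hk⟩} {b ⟨l, hl⟩} (measurableSet_singleton _)
        (measurableSet_singleton _)
      have e1 : {ω | X ω ∈ ({a ⟨k, hk⟩} : Set ℝ)} = E k := by
        ext ω
        simp only [Set.mem_setOf_eq, Set.mem_singleton_iff, hEmem k hk ω]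
      have e2 : {ω | Y ω ∈ ({b ⟨l, hl⟩} : Set ℝ)} = F l := by
        ext ω
        simp only [Set.mem_setOf_eq, Set.mem_singleton_iff, hFmem l hl ω]
      rw [e1, e2] at h
      exact h
    have hPU : P {ω | X ω ≤ a i ∧ Y ω ≤ b j}
        = P {ω | X ω ≤ a i} * P {ω | Y ω ≤ b j} := by
      have h := hInd (Iic (a i)) (Iic (b j)) measurableSet_Iic measurableSet_Iic
      have e1 : {ω | X ω ∈ Iic (a i)} = {ω | X ω ≤ a i} := by ext ω; simp [Set.mem_Iic]
      have e2 : {ω | Y ω ∈ Iic (b j)} = {ω | Y ω ≤ b j} := by ext ω; simp [Set.mem_Iic]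
      have e3 : {ω | X ω ≤ a i} ∩ {ω | Y ω ≤ b j} = {ω | X ω ≤ a i ∧ Y ω ≤ b j} := rfl
      rw [e1, e2, e3] at h
      exact h
    have hUpos : 0 < P {ω | X ω ≤ a i ∧ Y ω ≤ b j} := by
      rw [hPU]
      have h1 : 0 < P {ω | X ω ≤ a i} :=
        lt_of_lt_of_le (hXpos i) (measure_mono fun ω h => le_of_eq h)
      have h2 : 0 < P {ω | Y ω ≤ b j} :=
        lt_of_lt_of_le (hYpos j) (measure_mono fun ω h => le_of_eq h)
      exact ENNReal.mul_pos (ne_of_gt h1) (ne_of_gt h2)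
    refine ⟨hUpos, ?_⟩
    obtain ⟨hIA, hIB, hIC, hIS⟩ := hints i j
    have hpfac : ∀ k ∈ range (i.1+1), ∀ l ∈ range (j.1+1),
        p k l = (P (E k)).toReal * (P (F l)).toReal := by
      intro k hk l hl
      rw [Finset.mem_range] at hk hl
      have hkn : k < n := by have := i.isLt; omega
      have hlm : l < m := by have := j.isLt; omega
      rw [hp, hkey k l hkn hlm, ENNReal.toReal_mul]
    have hSfac : ∑ k ∈ range (i.1+1), ∑ l ∈ range (j.1+1), p k l
        = (∑ k ∈ range (i.1+1), (P (E k)).toReal)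
          * (∑ l ∈ range (j.1+1), (P (F l)).toReal) := by
      rw [Finset.sum_mul_sum]
      exact Finset.sum_congr rfl fun k hk => Finset.sum_congr rfl fun l hl =>
        hpfac k hk l hl
    have hAfac : ∑ k ∈ range (i.1+1), ∑ l ∈ range (j.1+1), (a' k * b' l) * p k l
        = (∑ k ∈ range (i.1+1), a' k * (P (E k)).toReal)
          * (∑ l ∈ range (j.1+1), b' l * (P (F l)).toReal) := by
      rw [Finset.sum_mul_sum]
      refine Finset.sum_congr rfl fun k hk => Finset.sum_congr rfl fun l hl => ?_
      rw [hpfac k hk l hl]; ring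
    have hBfac : ∑ k ∈ range (i.1+1), ∑ l ∈ range (j.1+1), a' k * p k l
        = (∑ k ∈ range (i.1+1), a' k * (P (E k)).toReal)
          * (∑ l ∈ range (j.1+1), (P (F l)).toReal) := by
      rw [Finset.sum_mul_sum]
      refine Finset.sum_congr rfl fun k hk => Finset.sum_congr rfl fun l hl => ?_
      rw [hpfac k hk l hl]; ring
    have hCfac : ∑ k ∈ range (i.1+1), ∑ l ∈ range (j.1+1), b' l * p k l
        = (∑ k ∈ range (i.1+1), (P (E k)).toReal)
          * (∑ l ∈ range (j.1+1), b' l * (P (F l)).toReal) := by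
      rw [Finset.sum_mul_sum]
      refine Finset.sum_congr rfl fun k hk => Finset.sum_congr rfl fun l hl => ?_
      rw [hpfac k hk l hl]; ring
    have hSpos : 0 < ∑ k ∈ range (i.1+1), ∑ l ∈ range (j.1+1), p k l := by
      rw [← hIS]
      exact ENNReal.toReal_pos (ne_of_gt hUpos) (measure_ne_top P _)
    have hσnn : 0 ≤ ∑ k ∈ range (i.1+1), (P (E k)).toReal :=
      Finset.sum_nonneg fun _ _ => ENNReal.toReal_nonneg
    have hτnn : 0 ≤ ∑ l ∈ range (j.1+1), (P (F l)).toReal :=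
      Finset.sum_nonneg fun _ _ => ENNReal.toReal_nonneg
    have hστ : 0 < (∑ k ∈ range (i.1+1), (P (E k)).toReal)
        * (∑ l ∈ range (j.1+1), (P (F l)).toReal) := by
      rw [← hSfac]; exact hSpos
    have hσpos : 0 < ∑ k ∈ range (i.1+1), (P (E k)).toReal := by nlinarith
    have hτpos : 0 < ∑ l ∈ range (j.1+1), (P (F l)).toReal := by nlinarith
    simp only [cexp]
    rw [hIA, hIB, hIC, hIS, hAfac, hBfac, hCfac, hSfac]
    field_simp
  · -- conditional expectation property implies independence
    intro h A B hAmeas hBmeas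
    have ha'mono : ∀ k l, k < l → l < n → a' k < a' l := by
      intro k l hkl hl
      rw [ha', ha', dif_pos (by omega : k < n), dif_pos hl]
      exact ha (show (⟨k, by omega⟩ : Fin n) < ⟨l, hl⟩ from hkl)
    have hb'mono : ∀ k l, k < l → l < m → b' k < b' l := by
      intro k l hkl hl
      rw [hb', hb', dif_pos (by omega : k < m), dif_pos hl]
      exact hb (show (⟨k, by omega⟩ : Fin m) < ⟨l, hl⟩ from hkl)
    have hpnn : ∀ k l, 0 ≤ p k l := by
      intro k l; rw [hp]; exact ENNReal.toReal_nonneg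
    have hcolpos : ∀ l, l < m → 0 < ∑ k ∈ range n, p k l := by
      intro l hl
      rw [← hcolsum l]
      have hFl : F l = {ω | Y ω = b ⟨l, hl⟩} := by rw [hF, dif_pos hl]
      rw [hFl]
      exact ENNReal.toReal_pos (ne_of_gt (hYpos ⟨l, hl⟩)) (measure_ne_top P _)
    have hcond : ∀ i, i < n → ∀ j, j < m →
        (∑ k ∈ range (i+1), ∑ l ∈ range (j+1), (a' k * b' l) * p k l) *
        (∑ k ∈ range (i+1), ∑ l ∈ range (j+1), p k l) =
        (∑ k ∈ range (i+1), ∑ l ∈ range (j+1), a' k * p k l) *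
        (∑ k ∈ range (i+1), ∑ l ∈ range (j+1), b' l * p k l) := by
      intro i hi j hj
      obtain ⟨hposU, hcexp⟩ := h ⟨i, hi⟩ ⟨j, hj⟩
      obtain ⟨hIA, hIB, hIC, hIS⟩ := hints ⟨i, hi⟩ ⟨j, hj⟩
      have hS : 0 < ∑ k ∈ range (i+1), ∑ l ∈ range (j+1), p k l := by
        rw [← hIS]
        exact ENNReal.toReal_pos (ne_of_gt hposU) (measure_ne_top P _)
      simp only [cexp] at hcexp
      rw [hIA, hIB, hIC, hIS] at hcexp
      have hSne : (∑ k ∈ range (i+1), ∑ l ∈ range (j+1), p k l) ≠ 0 := ne_of_gt hS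
      field_simp at hcexp
      refine mul_right_cancel₀ hSne ?_
      linear_combination (∑ k ∈ range (i+1), ∑ l ∈ range (j+1), p k l) * hcexp
    have hfac := core_lemma n a' ha'mono m b' hb'mono p hpnn hcolpos hcond
    have hPEF : ∀ k l, k < n → l < m → P (E k ∩ F l) = P (E k) * P (F l) := by
      intro k l hk hl
      have h1 := hfac k hk l hl
      rw [htot, one_mul, ← hrowsum k, ← hcolsum l, hp] at h1
      refine (ENNReal.toReal_eq_toReal_iff' (measure_ne_top P _)
        (ENNReal.mul_ne_top (measure_ne_top P _) (measure_ne_top P _))).1 ?_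
      rw [ENNReal.toReal_mul]
      exact h1
    obtain ⟨sA, hsA⟩ : ∃ s : Finset ℕ, s = (range n).filter (fun k => a' k ∈ A) := ⟨_, rfl⟩
    obtain ⟨sB, hsB⟩ : ∃ s : Finset ℕ, s = (range m).filter (fun l => b' l ∈ B) := ⟨_, rfl⟩
    have hXA : {ω | X ω ∈ A} = ⋃ k ∈ sA, E k := by
      ext ω
      simp only [Set.mem_setOf_eq, Set.mem_iUnion, exists_prop, hsA, Finset.mem_filter,
        Finset.mem_range]
      constructor
      · intro hω
        obtain ⟨k, hk⟩ := hXval ω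
        refine ⟨k.1, ⟨k.isLt, ?_⟩, (hEmem k.1 k.isLt ω).2 (by rw [Fin.eta]; exact hk)⟩
        rw [ha', dif_pos k.isLt, Fin.eta, ← hk]; exact hω
      · rintro ⟨k, ⟨hkn, hka⟩, hωE⟩
        have hx := (hEmem k hkn ω).1 hωE
        rw [hx]
        rw [ha', dif_pos hkn] at hka
        exact hka
    have hYB : {ω | Y ω ∈ B} = ⋃ l ∈ sB, F l := by
      ext ω
      simp only [Set.mem_setOf_eq, Set.mem_iUnion, exists_prop, hsB, Finset.mem_filter,
        Finset.mem_range]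
      constructor
      · intro hω
        obtain ⟨l, hl⟩ := hYval ω
        refine ⟨l.1, ⟨l.isLt, ?_⟩, (hFmem l.1 l.isLt ω).2 (by rw [Fin.eta]; exact hl)⟩
        rw [hb', dif_pos l.isLt, Fin.eta, ← hl]; exact hω
      · rintro ⟨l, ⟨hlm, hlb⟩, hωF⟩
        have hy := (hFmem l hlm ω).1 hωF
        rw [hy]
        rw [hb', dif_pos hlm] at hlb
        exact hlb
    have hXAm : P {ω | X ω ∈ A} = ∑ k ∈ sA, P (E k) := by
      rw [hXA]
      exact measure_biUnion_finset (fun k _ k' _ hne => hEdisj k k' hne)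
        (fun k _ => hEmeas k)
    have hYBm : P {ω | Y ω ∈ B} = ∑ l ∈ sB, P (F l) := by
      rw [hYB]
      exact measure_biUnion_finset (fun l _ l' _ hne => hFdisj l l' hne)
        (fun l _ => hFmeas l)
    have hInter : {ω | X ω ∈ A} ∩ {ω | Y ω ∈ B} = ⋃ t ∈ sA ×ˢ sB, E t.1 ∩ F t.2 := by
      rw [hXA, hYB]
      ext ω
      simp only [Set.mem_inter_iff, Set.mem_iUnion, exists_prop, Finset.mem_product,
        Set.mem_inter_iff]
      constructor
      · rintro ⟨⟨k, hk, hωE⟩, ⟨l, hl, hωF⟩⟩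
        exact ⟨(k, l), ⟨hk, hl⟩, hωE, hωF⟩
      · rintro ⟨⟨k, l⟩, ⟨hk, hl⟩, hωE, hωF⟩
        exact ⟨⟨k, hk, hωE⟩, ⟨l, hl, hωF⟩⟩
    rw [hInter, hXAm, hYBm]
    rw [measure_biUnion_finset (fun t _ t' _ hne => hGdisj t t' hne)
      (fun t _ => (hEmeas t.1).inter (hFmeas t.2))]
    rw [Finset.sum_mul_sum]
    rw [Finset.sum_product]
    refine Finset.sum_congr rfl fun k hk => Finset.sum_congr rfl fun l hl => ?_
    have hkn : k < n := by
      rw [hsA] at hk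
      exact Finset.mem_range.1 (Finset.mem_filter.1 hk).1
    have hlm : l < m := by
      rw [hsB] at hl
      exact Finset.mem_range.1 (Finset.mem_filter.1 hl).1
    exact hPEF k l hkn hlm
end

section
/- Let X be a random variable taking exactly two values a₁ < a₂, each with positive probability, and let Y be an integrable real-valued random variable (E|Y| < ∞). Then X and Y are stochastically independent if and only if for every t ∈ ℝ with ℙ(Y ≤ t) > 0, one has E[XY | Y ≤ t] = E[X | Y ≤ t] · E[Y | Y ≤ t]. -/
open MeasureTheory Set Filter

lemma split_integrals {Ω : Type*} [MeasurableSpace Ω] (P : Measure Ω) [IsProbabilityMeasure P]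
    (X Y : Ω → ℝ) (hX : Measurable X) (a₁ a₂ : ℝ) (hne : a₁ ≠ a₂)
    (hXval : ∀ ω, X ω = a₁ ∨ X ω = a₂) (hYint : Integrable Y P)
    (U : Set Ω) (hU : MeasurableSet U) :
    (∫ ω in U, X ω ∂P = a₁ * (P U).toReal + (a₂ - a₁) * (P ({ω | X ω = a₂} ∩ U)).toReal)
    ∧ (∫ ω in U, X ω * Y ω ∂P
        = a₁ * ∫ ω in U, Y ω ∂P + (a₂ - a₁) * ∫ ω in {ω | X ω = a₂} ∩ U, Y ω ∂P) := by
  set A' : Set Ω := {ω | X ω = a₂} with hA'def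
  have hA' : MeasurableSet A' := hX (measurableSet_singleton a₂)
  have hmem : ∀ ω, (ω ∈ A' ↔ X ω = a₂) := fun ω => Iff.rfl
  constructor
  · have hXeq : ∀ ω, X ω = a₁ + (a₂ - a₁) * A'.indicator (fun _ => (1:ℝ)) ω := by
      intro ω
      rcases hXval ω with h | h
      · rw [Set.indicator_of_notMem (by simp [hA'def, h, hne]), h]; ring
      · rw [Set.indicator_of_mem (by simpa [hA'def] using h), h]; ring
    calc ∫ ω in U, X ω ∂P
        = ∫ ω in U, (a₁ + (a₂ - a₁) * A'.indicator (fun _ => (1:ℝ)) ω) ∂P :=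
          integral_congr_ae (Eventually.of_forall fun ω => hXeq ω)
      _ = a₁ * (P U).toReal + (a₂ - a₁) * (P (A' ∩ U)).toReal := by
          rw [integral_add (integrableOn_const (C := a₁) (measure_ne_top P U))
            (((integrable_const (1:ℝ)).indicator hA').integrableOn.const_mul _),
            integral_const, integral_const_mul, setIntegral_indicator hA', setIntegral_const]
          simp [measureReal_def, mul_comm, inter_comm]
  · have hXYeq : ∀ ω, X ω * Y ω = a₁ * Y ω + (a₂ - a₁) * A'.indicator Y ω := by
      intro ω
      rcases hXval ω with h | h
      · rw [Set.indicator_of_notMem (by simp [hA'def, h, hne]), h]; ring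
      · rw [Set.indicator_of_mem (by simpa [hA'def] using h), h]; ring
    calc ∫ ω in U, X ω * Y ω ∂P
        = ∫ ω in U, (a₁ * Y ω + (a₂ - a₁) * A'.indicator Y ω) ∂P :=
          integral_congr_ae (Eventually.of_forall fun ω => hXYeq ω)
      _ = a₁ * ∫ ω in U, Y ω ∂P + (a₂ - a₁) * ∫ ω in A' ∩ U, Y ω ∂P := by
          rw [integral_add (hYint.integrableOn.const_mul _)
            (((hYint.indicator hA').integrableOn).const_mul _),
            integral_const_mul, integral_const_mul, setIntegral_indicator hA']
          rw [inter_comm]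

lemma cum_diff {Ω : Type*} [MeasurableSpace Ω] (ρ : Measure Ω) [IsFiniteMeasure ρ]
    (Y : Ω → ℝ) (hY : Measurable Y) (hYint : Integrable Y ρ) {t₀ t₁ : ℝ} (h01 : t₀ ≤ t₁) :
    (∫ ω, max (t₁ - Y ω) 0 ∂ρ) - ∫ ω, max (t₀ - Y ω) 0 ∂ρ
      = ∫ u in t₀..t₁, (ρ {ω | Y ω ≤ u}).toReal := by
  haveI : IsFiniteMeasure ((volume : Measure ℝ).restrict (Ioc t₀ t₁)) :=
    ⟨by rw [Measure.restrict_apply_univ]; exact measure_Ioc_lt_top⟩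
  have hset : MeasurableSet {p : ℝ × Ω | Y p.2 ≤ p.1} :=
    measurableSet_le (hY.comp measurable_snd) measurable_fst
  have hswap := MeasureTheory.integral_integral_swap
      (μ := (volume : Measure ℝ).restrict (Ioc t₀ t₁)) (ν := ρ)
      (f := fun u ω => if Y ω ≤ u then (1:ℝ) else 0) ?hint
  case hint =>
    have : (Function.uncurry fun u ω => if Y ω ≤ u then (1:ℝ) else 0)
        = {p : ℝ × Ω | Y p.2 ≤ p.1}.indicator (fun _ => (1:ℝ)) := by
      funext p
      simp [Function.uncurry, Set.indicator_apply, mem_setOf_eq]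
    rw [this]
    exact (integrable_const (1:ℝ)).indicator hset
  rw [intervalIntegral.integral_of_le h01]
  calc ∫ ω, max (t₁ - Y ω) 0 ∂ρ - ∫ ω, max (t₀ - Y ω) 0 ∂ρ
      = ∫ ω, (max (t₁ - Y ω) 0 - max (t₀ - Y ω) 0) ∂ρ :=
        (integral_sub ((integrable_const t₁).sub hYint).pos_part
          ((integrable_const t₀).sub hYint).pos_part).symm
    _ = ∫ ω, (∫ u in Ioc t₀ t₁, if Y ω ≤ u then (1:ℝ) else 0) ∂ρ := by
        refine integral_congr_ae (Eventually.of_forall fun ω => ?_)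
        show max (t₁ - Y ω) 0 - max (t₀ - Y ω) 0 = ∫ u in Ioc t₀ t₁, if Y ω ≤ u then (1:ℝ) else 0
        have : (fun u => if Y ω ≤ u then (1:ℝ) else 0) = (Ici (Y ω)).indicator (fun _ => 1) := by
          funext u; simp [Set.indicator_apply]
        rw [this, setIntegral_indicator measurableSet_Ici, setIntegral_const, measureReal_def]
        rcases le_or_gt (Y ω) t₀ with h0 | h0
        · have : Ioc t₀ t₁ ∩ Ici (Y ω) = Ioc t₀ t₁ := by
            rw [inter_eq_left]; exact fun u hu => le_trans h0 hu.1.le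
          rw [this, Real.volume_Ioc, ENNReal.toReal_ofReal (by linarith)]
          simp only [smul_eq_mul, mul_one]
          rw [max_eq_left (by linarith), max_eq_left (by linarith)]; ring
        · rcases le_or_gt (Y ω) t₁ with h1 | h1
          · have : Ioc t₀ t₁ ∩ Ici (Y ω) = Icc (Y ω) t₁ := by
              ext u; simp only [mem_inter_iff, mem_Ioc, mem_Ici, mem_Icc]
              constructor
              · rintro ⟨⟨_, hu1⟩, hu2⟩; exact ⟨hu2, hu1⟩
              · rintro ⟨hu2, hu1⟩; exact ⟨⟨lt_of_lt_of_le h0 hu2, hu1⟩, hu2⟩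
            rw [this, Real.volume_Icc, ENNReal.toReal_ofReal (by linarith)]
            simp only [smul_eq_mul, mul_one]
            rw [max_eq_left (by linarith), max_eq_right (by linarith)]; ring
          · have : Ioc t₀ t₁ ∩ Ici (Y ω) = ∅ := by
              ext u; simp only [mem_inter_iff, mem_Ioc, mem_Ici, mem_empty_iff_false, iff_false]
              rintro ⟨⟨_, hu1⟩, hu2⟩; linarith
            rw [this]
            simp only [measure_empty, ENNReal.toReal_zero, zero_smul]
            rw [max_eq_right (by linarith), max_eq_right (by linarith)]; ring
    _ = ∫ u in Ioc t₀ t₁, (∫ ω, if Y ω ≤ u then (1:ℝ) else 0 ∂ρ) := hswap.symm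
    _ = ∫ u in Ioc t₀ t₁, (ρ {ω | Y ω ≤ u}).toReal := by
        refine setIntegral_congr_ae measurableSet_Ioc (Eventually.of_forall fun u _ => ?_)
        have : (fun ω => if Y ω ≤ u then (1:ℝ) else 0)
            = {ω | Y ω ≤ u}.indicator (fun _ => 1) := by
          funext ω; simp [Set.indicator_apply, mem_setOf_eq]
        have hs : MeasurableSet {ω | Y ω ≤ u} := hY measurableSet_Iic
        rw [this]
        simpa [measureReal_def] using integral_indicator_const (1:ℝ) hs

lemma key_nonpos (F G A h : ℝ → ℝ) (p : ℝ)
    (hGmono : Monotone G) (hGnn : ∀ t, 0 ≤ G t)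
    (hG0 : ∀ t, G t = 0 → h t = 0)
    (hK : ∀ t, 0 < G t → h t * G t = (t * G t - A t) * (F t - p * G t))
    (hw : ∀ t, 0 ≤ t * G t - A t)
    (hcont : Continuous h)
    (hlim : Tendsto h atTop (nhds 0))
    (hdiff : ∀ t₀ t₁, t₀ ≤ t₁ → h t₁ - h t₀ = ∫ u in t₀..t₁, (F u - p * G u)) :
    ∀ t, h t ≤ 0 := by
  by_contra hc
  push_neg at hc
  obtain ⟨t₀, ht₀⟩ := hc
  set c := h t₀ with hc_def
  have hGt₀ : 0 < G t₀ := by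
    rcases eq_or_lt_of_le (hGnn t₀) with h0 | h0
    · exact absurd (hG0 t₀ h0.symm) (by linarith)
    · exact h0
  set S : Set ℝ := Ici t₀ ∩ {t | h t ≤ c / 2} with hS_def
  have hSne : S.Nonempty := by
    have h1 : ∀ᶠ t in atTop, h t < c / 2 := hlim.eventually_lt_const (by linarith)
    obtain ⟨t₂, ht₂, ht₂'⟩ := (h1.and (eventually_ge_atTop t₀)).exists
    exact ⟨t₂, ht₂', ht₂.le⟩
  have hSbdd : BddBelow S := ⟨t₀, fun x hx => hx.1⟩
  have hSclosed : IsClosed S :=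
    isClosed_Ici.inter (isClosed_le hcont continuous_const)
  set t₁ := sInf S with ht₁_def
  have ht₁S : t₁ ∈ S := hSclosed.csInf_mem hSne hSbdd
  have ht₀₁ : t₀ ≤ t₁ := ht₁S.1
  have hpos : ∀ u ∈ Ico t₀ t₁, 0 < F u - p * G u := by
    intro u hu
    have huS : u ∉ S := fun hmem => absurd (csInf_le hSbdd hmem) (not_le.mpr hu.2)
    have hhu : c / 2 < h u := by
      by_contra hle
      exact huS ⟨hu.1, le_of_not_gt hle⟩
    have hGu : 0 < G u := lt_of_lt_of_le hGt₀ (hGmono hu.1)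
    have hprod : 0 < (u * G u - A u) * (F u - p * G u) := by
      rw [← hK u hGu]
      have : 0 < h u := by linarith [ht₀]
      positivity
    rcases mul_pos_iff.mp hprod with ⟨_, h2⟩ | ⟨h1, _⟩
    · exact h2
    · exact absurd (hw u) (not_le.mpr h1)
  have hint : 0 ≤ ∫ u in t₀..t₁, (F u - p * G u) := by
    apply intervalIntegral.integral_nonneg_of_ae_restrict ht₀₁
    have key : ∀ᵐ u ∂(volume.restrict (Icc t₀ t₁)), 0 ≤ F u - p * G u := by
      rw [ae_restrict_iff' measurableSet_Icc]
      have h1 : ∀ᵐ (u : ℝ) ∂volume, u ≠ t₁ := by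
        rw [ae_iff]
        have : {u : ℝ | ¬u ≠ t₁} = {t₁} := by ext u; simp
        rw [this]; exact Real.volume_singleton
      filter_upwards [h1] with u hu hmem
      exact le_of_lt (hpos u ⟨hmem.1, lt_of_le_of_ne hmem.2 hu⟩)
    exact key
  have := hdiff t₀ t₁ ht₀₁
  have : c ≤ h t₁ := by linarith
  have : h t₁ ≤ c / 2 := ht₁S.2
  linarith


lemma setint_factor {Ω : Type*} [MeasurableSpace Ω] (P : Measure Ω) [IsProbabilityMeasure P]
    (Y : Ω → ℝ) (hY : Measurable Y) (A' : Set Ω) (hA' : MeasurableSet A')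
    (hmap : Measure.map Y (P.restrict A') = P A' • Measure.map Y P)
    (s : Set ℝ) (hs : MeasurableSet s) :
    ∫ ω in A' ∩ Y ⁻¹' s, Y ω ∂P = (P A').toReal * ∫ ω in Y ⁻¹' s, Y ω ∂P := by
  have h1 : ∫ ω in A' ∩ Y ⁻¹' s, Y ω ∂P = ∫ y in s, y ∂(Measure.map Y (P.restrict A')) := by
    rw [setIntegral_map (f := fun y : ℝ => y) hs measurable_id.aestronglyMeasurable hY.aemeasurable,
      Measure.restrict_restrict (hY hs), inter_comm]
  rw [h1, hmap, Measure.restrict_smul, integral_smul_measure,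
    setIntegral_map (f := fun y : ℝ => y) hs measurable_id.aestronglyMeasurable hY.aemeasurable, smul_eq_mul]


lemma pospart_tendsto {Ω : Type*} [MeasurableSpace Ω] (ρ : Measure Ω) [IsFiniteMeasure ρ]
    (Y : Ω → ℝ) (hY : Measurable Y) (hint : Integrable Y ρ) :
    Tendsto (fun t : ℝ => ∫ ω, max (Y ω - t) 0 ∂ρ) atTop (nhds 0) := by
  have h0 : nhds (0:ℝ) = nhds (∫ ω, (0:ℝ) ∂ρ) := by rw [integral_zero]
  rw [h0]
  apply tendsto_integral_filter_of_dominated_convergence (fun ω => |Y ω|)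
  · exact Eventually.of_forall fun t =>
      ((hY.sub measurable_const).max measurable_const).aestronglyMeasurable
  · filter_upwards [eventually_ge_atTop (0:ℝ)] with t ht
    refine Eventually.of_forall fun ω => ?_
    rw [Real.norm_eq_abs, abs_of_nonneg (le_max_right _ _)]
    rcases le_or_gt (Y ω) t with hc | hc
    · rw [max_eq_right (by linarith)]; positivity
    · rw [max_eq_left (by linarith)]
      exact le_trans (by linarith) (le_abs_self _)
  · exact hint.abs
  · refine Eventually.of_forall fun ω => ?_
    apply Tendsto.congr' ?_ tendsto_const_nhds
    filter_upwards [eventually_ge_atTop (Y ω)] with t ht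
    exact (max_eq_right (by linarith)).symm

lemma reverse_core {Ω : Type*} [MeasurableSpace Ω] (P : Measure Ω) [IsProbabilityMeasure P]
    (X Y : Ω → ℝ) (hX : Measurable X) (hY : Measurable Y)
    (a₁ a₂ : ℝ) (ha : a₁ < a₂) (hXval : ∀ ω, X ω = a₁ ∨ X ω = a₂)
    (hYint : Integrable Y P)
    (hcexp : ∀ t : ℝ, 0 < P {ω | Y ω ≤ t} →
      cexp P {ω | Y ω ≤ t} (fun ω => X ω * Y ω)
        = cexp P {ω | Y ω ≤ t} X * cexp P {ω | Y ω ≤ t} Y)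
    (A' : Set Ω) (hA'eq : A' = {ω | X ω = a₂})
    (p : ℝ) (hpeq : p = (P A').toReal)
    (F G Aa Bb h : ℝ → ℝ)
    (hFeq : ∀ t, F t = (P (A' ∩ {ω | Y ω ≤ t})).toReal)
    (hGeq : ∀ t, G t = (P {ω | Y ω ≤ t}).toReal)
    (hAaeq : ∀ t, Aa t = ∫ ω in {ω | Y ω ≤ t}, Y ω ∂P)
    (hBbeq : ∀ t, Bb t = ∫ ω in A' ∩ {ω | Y ω ≤ t}, Y ω ∂P)
    (hheq : ∀ t, h t = t * F t - Bb t - p * (t * G t - Aa t)) :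
    ∀ t, P (A' ∩ {ω | Y ω ≤ t}) = P A' * P {ω | Y ω ≤ t} := by
  have hA'm : MeasurableSet A' := hA'eq ▸ hX (measurableSet_singleton a₂)
  have hUm : ∀ t : ℝ, MeasurableSet {ω | Y ω ≤ t} := fun t => hY measurableSet_Iic
  have hGnn : ∀ t, 0 ≤ G t := fun t => (hGeq t) ▸ ENNReal.toReal_nonneg
  have hFnn : ∀ t, 0 ≤ F t := fun t => (hFeq t) ▸ ENNReal.toReal_nonneg
  have hpnn : 0 ≤ p := hpeq ▸ ENNReal.toReal_nonneg
  have hp1 : p ≤ 1 := by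
    rw [hpeq]
    exact ENNReal.toReal_le_of_le_ofReal one_pos.le (by simpa using prob_le_one)
  have hG1 : ∀ t, G t ≤ 1 := by
    intro t; rw [hGeq]
    exact ENNReal.toReal_le_of_le_ofReal one_pos.le (by simpa using prob_le_one)
  have hF1 : ∀ t, F t ≤ 1 := by
    intro t; rw [hFeq]
    exact ENNReal.toReal_le_of_le_ofReal one_pos.le (by simpa using prob_le_one)
  have hGmono : Monotone G := by
    intro s t hst
    rw [hGeq, hGeq]
    exact ENNReal.toReal_mono (measure_ne_top P _)
      (measure_mono fun ω hω => le_trans hω hst)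
  have hFmono : Monotone F := by
    intro s t hst
    rw [hFeq, hFeq]
    exact ENNReal.toReal_mono (measure_ne_top P _)
      (measure_mono (inter_subset_inter_right _ fun ω hω => le_trans hω hst))
  have hFleG : ∀ t, F t ≤ G t := by
    intro t; rw [hFeq, hGeq]
    exact ENNReal.toReal_mono (measure_ne_top P _) (measure_mono inter_subset_right)
  have hG0 : ∀ t, G t = 0 → P {ω | Y ω ≤ t} = 0 := by
    intro t ht
    rw [hGeq] at ht
    exact (ENNReal.toReal_eq_zero_iff _).mp ht |>.resolve_right (measure_ne_top P _)
  -- the factorization from the cexp hypothesis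
  have hBGFA : ∀ t, 0 < G t → Bb t * G t = F t * Aa t := by
    intro t hGt
    have hPU : 0 < P {ω | Y ω ≤ t} := by
      rcases eq_zero_or_pos (P {ω | Y ω ≤ t}) with h0 | h0
      · exfalso
        have : G t = 0 := by rw [hGeq, h0, ENNReal.toReal_zero]
        linarith
      · exact h0
    have heq := hcexp t hPU
    have hsplit := split_integrals P X Y hX a₁ a₂ (ne_of_lt ha) hXval hYint _ (hUm t)
    simp only [cexp] at heq
    rw [hsplit.1, hsplit.2] at heq
    rw [← hA'eq, ← hGeq, ← hFeq, ← hAaeq, ← hBbeq] at heq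
    have hgne : G t ≠ 0 := ne_of_gt hGt
    field_simp at heq
    have hc : a₂ - a₁ ≠ 0 := sub_ne_zero.mpr (ne_of_gt ha)
    have h2 : (a₁ * Aa t + (a₂ - a₁) * Bb t) * G t = (a₁ * G t + (a₂ - a₁) * F t) * Aa t :=
      by linear_combination heq
    apply mul_left_cancel₀ hc
    linear_combination h2
  -- pos-part integral identities
  have hmax_eq : ∀ t : ℝ, (fun ω => max (t - Y ω) 0)
      = {ω | Y ω ≤ t}.indicator (fun ω => t - Y ω) := by
    intro t; funext ω
    simp only [Set.indicator_apply, mem_setOf_eq]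
    by_cases hω : Y ω ≤ t
    · rw [if_pos hω]; exact max_eq_left (by linarith)
    · rw [if_neg hω]; push_neg at hω; exact max_eq_right (by linarith)
  have hk2 : ∀ t, ∫ ω, max (t - Y ω) 0 ∂P = t * G t - Aa t := by
    intro t
    rw [hmax_eq t, integral_indicator (hUm t),
      integral_sub (integrableOn_const (C := t) (measure_ne_top _ _)) hYint.integrableOn,
      setIntegral_const, measureReal_def, hGeq, hAaeq, smul_eq_mul, mul_comm]
  have hk1 : ∀ t, ∫ ω, max (t - Y ω) 0 ∂(P.restrict A') = t * F t - Bb t := by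
    intro t
    rw [hmax_eq t, integral_indicator (hUm t),
      integral_sub (integrableOn_const (C := t) (measure_ne_top _ _))
        hYint.restrict.integrableOn,
      setIntegral_const, measureReal_def, Measure.restrict_restrict (hUm t), Measure.restrict_apply (hUm t),
      hFeq, hBbeq, smul_eq_mul, mul_comm, inter_comm]
  -- global factorization of E[1_A' Y]
  have hC : ∫ ω in A', Y ω ∂P = p * ∫ ω, Y ω ∂P := by
    have hsets_mono : Monotone (fun n : ℕ => {ω | Y ω ≤ (n:ℝ)}) := by
      intro m n hmn ω hω
      exact le_trans (show Y ω ≤ (m:ℝ) from hω) (Nat.cast_le.mpr hmn)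
    have hsets_union : (⋃ n : ℕ, {ω | Y ω ≤ (n:ℝ)}) = univ := by
      ext ω
      simp only [mem_iUnion, mem_univ, iff_true, mem_setOf_eq]
      exact exists_nat_ge (Y ω)
    have hsets_mono' : Monotone (fun n : ℕ => A' ∩ {ω | Y ω ≤ (n:ℝ)}) :=
      fun m n hmn => inter_subset_inter_right _ (hsets_mono hmn)
    have hsets_union' : (⋃ n : ℕ, A' ∩ {ω | Y ω ≤ (n:ℝ)}) = A' := by
      rw [← inter_iUnion, hsets_union, inter_univ]
    have hGlim : Tendsto (fun n : ℕ => G n) atTop (nhds 1) := by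
      have h1 := tendsto_measure_iUnion_atTop (μ := P) hsets_mono
      rw [hsets_union, measure_univ] at h1
      have h2 := (ENNReal.tendsto_toReal ENNReal.one_ne_top).comp h1
      simp only [ENNReal.toReal_one] at h2
      refine h2.congr fun n => ?_
      simp [Function.comp, hGeq]
    have hFlim : Tendsto (fun n : ℕ => F n) atTop (nhds p) := by
      have h1 := tendsto_measure_iUnion_atTop (μ := P) hsets_mono'
      rw [hsets_union'] at h1
      have h2 := (ENNReal.tendsto_toReal (measure_ne_top P A')).comp h1
      rw [← hpeq] at h2
      refine h2.congr fun n => ?_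
      simp [Function.comp, hFeq]
    have hAalim : Tendsto (fun n : ℕ => Aa n) atTop (nhds (∫ ω, Y ω ∂P)) := by
      have h1 := tendsto_setIntegral_of_monotone (fun n : ℕ => hUm _) hsets_mono
        (by rw [hsets_union]; exact hYint.integrableOn)
      rw [hsets_union, setIntegral_univ] at h1
      refine h1.congr fun n => ?_
      rw [hAaeq]
    have hBblim : Tendsto (fun n : ℕ => Bb n) atTop (nhds (∫ ω in A', Y ω ∂P)) := by
      have h1 := tendsto_setIntegral_of_monotone
        (fun n : ℕ => hA'm.inter (hUm _)) hsets_mono'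
        (by rw [hsets_union']; exact hYint.integrableOn)
      rw [hsets_union'] at h1
      refine h1.congr fun n => ?_
      rw [hBbeq]
    have hev : ∀ᶠ n : ℕ in atTop, Bb n * G n = F n * Aa n := by
      filter_upwards [hGlim.eventually_const_lt one_pos] with n hn
      exact hBGFA _ hn
    have := tendsto_nhds_unique_of_eventuallyEq (hBblim.mul hGlim) (hFlim.mul hAalim) hev
    simpa using this
  -- fundamental theorem (Fubini)
  have hpGmono : Monotone (fun u => p * G u) :=
    fun a b hab => mul_le_mul_of_nonneg_left (hGmono hab) hpnn
  have hdiff : ∀ t₀ t₁ : ℝ, t₀ ≤ t₁ → h t₁ - h t₀ = ∫ u in t₀..t₁, (F u - p * G u) := by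
    intro t₀ t₁ h01
    have hd1 := cum_diff (P.restrict A') Y hY hYint.restrict h01
    have hd2 := cum_diff P Y hY hYint h01
    have hres : ∀ u : ℝ, ((P.restrict A') {ω | Y ω ≤ u}).toReal = F u := by
      intro u; rw [Measure.restrict_apply (hUm u), hFeq, inter_comm]
    simp only [hres] at hd1
    simp only [← hGeq] at hd2
    rw [hk1 t₀, hk1 t₁] at hd1
    rw [hk2 t₀, hk2 t₁] at hd2
    have heqint : ∫ u in t₀..t₁, (F u - p * G u)
        = (∫ u in t₀..t₁, F u) - p * ∫ u in t₀..t₁, G u := by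
      rw [intervalIntegral.integral_sub hFmono.intervalIntegrable
        hpGmono.intervalIntegrable, intervalIntegral.integral_const_mul]
    rw [heqint, ← hd1, ← hd2, hheq, hheq]
    ring
  have hbound : ∀ u : ℝ, |F u - p * G u| ≤ 1 := by
    intro u
    rw [abs_le]
    constructor
    · nlinarith [hFnn u, hG1 u, hGnn u]
    · nlinarith [hF1 u, hGnn u]
  have hcont : Continuous h := by
    have hlip : LipschitzWith 1 h := by
      apply LipschitzWith.of_dist_le_mul
      intro s t
      wlog hst : t ≤ s generalizing s t
      · rw [dist_comm s t, dist_comm (h s) (h t)]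
        exact this t s (le_of_not_ge hst)
      rw [Real.dist_eq, Real.dist_eq]
      have habs : |h s - h t| ≤ 1 * |s - t| := by
        rw [hdiff t s hst]
        have h5 := intervalIntegral.norm_integral_le_of_norm_le_const
          (a := t) (b := s) (C := 1) (f := fun u => F u - p * G u)
          (fun x _ => by rw [Real.norm_eq_abs]; exact hbound x)
        rw [Real.norm_eq_abs] at h5
        exact h5
      simpa using habs
    exact hlip.continuous
  have hmax_split : ∀ (t : ℝ) (ω : Ω), max (Y ω - t) 0 = (Y ω - t) + max (t - Y ω) 0 := by
    intro t ω
    rcases le_or_gt (Y ω) t with hc | hc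
    · rw [max_eq_right (by linarith), max_eq_left (by linarith)]; ring
    · rw [max_eq_left (by linarith), max_eq_right (by linarith)]; ring
  have hhform : ∀ t, h t
      = (∫ ω in A', max (Y ω - t) 0 ∂P) - p * ∫ ω, max (Y ω - t) 0 ∂P := by
    intro t
    have e1 : ∫ ω in A', max (Y ω - t) 0 ∂P
        = ((∫ ω in A', Y ω ∂P) - t * p) + (t * F t - Bb t) := by
      calc ∫ ω in A', max (Y ω - t) 0 ∂P
          = ∫ ω in A', ((Y ω - t) + max (t - Y ω) 0) ∂P :=
            integral_congr_ae (Eventually.of_forall fun ω => hmax_split t ω)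
        _ = (∫ ω in A', (Y ω - t) ∂P) + ∫ ω in A', max (t - Y ω) 0 ∂P :=
            integral_add (hYint.restrict.sub (integrable_const t))
              ((integrable_const t).sub hYint.restrict).pos_part
        _ = ((∫ ω in A', Y ω ∂P) - t * p) + (t * F t - Bb t) := by
            rw [integral_sub hYint.restrict (integrable_const t), integral_const, hk1 t]
            simp only [measureReal_def, Measure.restrict_apply_univ, smul_eq_mul, hpeq]
            ring_nf
    have e2 : ∫ ω, max (Y ω - t) 0 ∂P
        = ((∫ ω, Y ω ∂P) - t) + (t * G t - Aa t) := by
      calc ∫ ω, max (Y ω - t) 0 ∂P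
          = ∫ ω, ((Y ω - t) + max (t - Y ω) 0) ∂P :=
            integral_congr_ae (Eventually.of_forall fun ω => hmax_split t ω)
        _ = (∫ ω, (Y ω - t) ∂P) + ∫ ω, max (t - Y ω) 0 ∂P :=
            integral_add (hYint.sub (integrable_const t))
              ((integrable_const t).sub hYint).pos_part
        _ = ((∫ ω, Y ω ∂P) - t) + (t * G t - Aa t) := by
            rw [integral_sub hYint (integrable_const t), integral_const, hk2 t]
            simp
    rw [e1, e2, hheq]
    have := hC
    ring_nf
    linarith [hC]
  have hlim : Tendsto h atTop (nhds 0) := by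
    have T1 := pospart_tendsto (P.restrict A') Y hY hYint.restrict
    have T2 := pospart_tendsto P Y hY hYint
    have T3 := T1.sub (T2.const_mul p)
    simp only [mul_zero, sub_zero] at T3
    exact T3.congr fun t => (hhform t).symm
  have hG0h : ∀ t, G t = 0 → h t = 0 := by
    intro t ht
    have hPU := hG0 t ht
    have hF0 : F t = 0 := by
      rw [hFeq, measure_mono_null inter_subset_right hPU, ENNReal.toReal_zero]
    have hAa0 : Aa t = 0 := by
      rw [hAaeq, Measure.restrict_eq_zero.mpr hPU, integral_zero_measure]
    have hBb0 : Bb t = 0 := by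
      rw [hBbeq, Measure.restrict_eq_zero.mpr (measure_mono_null inter_subset_right hPU),
        integral_zero_measure]
    rw [hheq, hF0, hAa0, hBb0, ht]
    ring
  have hK : ∀ t, 0 < G t → h t * G t = (t * G t - Aa t) * (F t - p * G t) := by
    intro t hGt
    rw [hheq]
    linear_combination (-1 : ℝ) * hBGFA t hGt
  have hw : ∀ t, 0 ≤ t * G t - Aa t := by
    intro t
    rw [← hk2 t]
    exact integral_nonneg fun ω => le_max_right _ _
  have hle : ∀ t, h t ≤ 0 :=
    key_nonpos F G Aa h p hGmono hGnn hG0h hK hw hcont hlim hdiff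
  have hge : ∀ t, 0 ≤ h t := by
    have hneg := key_nonpos (fun t => G t - F t) G Aa (fun t => -h t) (1 - p)
      hGmono hGnn
      (fun t h0 => by
        show -h t = 0
        rw [hG0h t h0]; ring)
      (fun t hGt => by
        show -h t * G t = (t * G t - Aa t) * ((G t - F t) - (1 - p) * G t)
        have h1 := hK t hGt
        linear_combination (-1 : ℝ) * h1)
      hw hcont.neg (by simpa using hlim.neg)
      (fun t₀ t₁ h01 => by
        have h1 := hdiff t₀ t₁ h01
        have h2 : EqOn (fun u => G u - F u - (1 - p) * G u)
            (fun u => -(F u - p * G u)) (uIcc t₀ t₁) := fun u _ => by ring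
        rw [intervalIntegral.integral_congr h2, intervalIntegral.integral_neg, ← h1]
        ring)
    intro t
    have := hneg t
    simp only [neg_nonpos] at this
    exact this
  have hzero : ∀ t, h t = 0 := fun t => le_antisymm (hle t) (hge t)
  have hFpG : ∀ t, F t = p * G t := by
    intro t
    rcases eq_or_lt_of_le (hGnn t) with h0 | hGt
    · rw [hFeq, measure_mono_null inter_subset_right (hG0 t h0.symm), ENNReal.toReal_zero,
        ← h0]
      ring
    · have hgt : ∀ s, t < s → F s = p * G s := by
        intro s hts
        have hGs : 0 < G s := lt_of_lt_of_le hGt (hGmono hts.le)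
        have hKs := hK s hGs
        rw [hzero s, zero_mul] at hKs
        have hwpos : 0 < s * G s - Aa s := by
          rw [← hk2 s]
          have hstep1 : (s - t) * G t = ∫ ω in {ω | Y ω ≤ t}, (s - t) ∂P := by
            rw [setIntegral_const, measureReal_def, hGeq, smul_eq_mul, mul_comm]
          have hstep2 : ∫ ω in {ω | Y ω ≤ t}, (s - t) ∂P
              ≤ ∫ ω in {ω | Y ω ≤ t}, max (s - Y ω) 0 ∂P := by
            apply setIntegral_mono_on (integrableOn_const (C := s - t) (measure_ne_top _ _))
              (((integrable_const s).sub hYint).pos_part.integrableOn) (hUm t)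
            intro ω hω
            have hω' : Y ω ≤ t := hω
            show s - t ≤ max (s - Y ω) 0
            exact le_trans (by linarith) (le_max_left _ _)
          have hstep3 : ∫ ω in {ω | Y ω ≤ t}, max (s - Y ω) 0 ∂P
              ≤ ∫ ω, max (s - Y ω) 0 ∂P :=
            setIntegral_le_integral ((integrable_const s).sub hYint).pos_part
              (Eventually.of_forall fun ω => le_max_right _ _)
          nlinarith [mul_pos (sub_pos.mpr hts) hGt]
        rcases mul_eq_zero.mp hKs.symm with h1 | h1
        · exact absurd h1 (ne_of_gt hwpos)
        · linarith
      have hseq : ∀ n : ℕ, F (t + 1/((n:ℝ)+1)) = p * G (t + 1/((n:ℝ)+1)) := by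
        intro n
        apply hgt
        have : (0:ℝ) < 1/((n:ℝ)+1) := by positivity
        linarith
      have hint_eq : (⋂ n : ℕ, {ω | Y ω ≤ t + 1/((n:ℝ)+1)}) = {ω | Y ω ≤ t} := by
        ext ω
        simp only [mem_iInter, mem_setOf_eq]
        constructor
        · intro hω
          have hlim2 : Tendsto (fun n : ℕ => t + 1/((n:ℝ)+1)) atTop (nhds t) := by
            have h4 : Tendsto (fun n : ℕ => t + 1/((n:ℝ)+1)) atTop (nhds (t + 0)) :=
              tendsto_const_nhds.add tendsto_one_div_add_atTop_nhds_zero_nat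
            simpa using h4
          exact ge_of_tendsto' hlim2 hω
        · intro hω n
          have : (0:ℝ) < 1/((n:ℝ)+1) := by positivity
          linarith
      have hanti : Antitone (fun n : ℕ => {ω | Y ω ≤ t + 1/((n:ℝ)+1)}) := by
        intro m n hmn ω hω
        have hm1 : ((m:ℝ)+1) ≤ ((n:ℝ)+1) := by
          have h5 : (m:ℝ) ≤ (n:ℝ) := Nat.cast_le.mpr hmn
          linarith
        have : 1/((n:ℝ)+1) ≤ 1/((m:ℝ)+1) := by
          apply one_div_le_one_div_of_le (by positivity) hm1
        exact le_trans (show Y ω ≤ t + 1/((n:ℝ)+1) from hω) (by linarith)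
      have hGlim2 : Tendsto (fun n : ℕ => G (t + 1/((n:ℝ)+1))) atTop (nhds (G t)) := by
        have h1 := tendsto_measure_iInter_atTop (μ := P)
          (fun n : ℕ => (hUm (t + 1/((n:ℝ)+1))).nullMeasurableSet)
          hanti ⟨0, measure_ne_top P _⟩
        rw [hint_eq] at h1
        have h2 := (ENNReal.tendsto_toReal (measure_ne_top P _)).comp h1
        rw [show G t = (P {ω | Y ω ≤ t}).toReal from hGeq t]
        refine h2.congr fun n => ?_
        simp [Function.comp, hGeq]
      have hFlim2 : Tendsto (fun n : ℕ => F (t + 1/((n:ℝ)+1))) atTop (nhds (F t)) := by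
        have h1 := tendsto_measure_iInter_atTop (μ := P)
          (fun n : ℕ => (hA'm.inter (hUm (t + 1/((n:ℝ)+1)))).nullMeasurableSet)
          (fun m n hmn => inter_subset_inter_right _ (hanti hmn))
          ⟨0, measure_ne_top P _⟩
        rw [show (⋂ n : ℕ, A' ∩ {ω | Y ω ≤ t + 1/((n:ℝ)+1)}) = A' ∩ {ω | Y ω ≤ t} by
          rw [← inter_iInter, hint_eq]] at h1
        have h2 := (ENNReal.tendsto_toReal (measure_ne_top P _)).comp h1
        rw [show F t = (P (A' ∩ {ω | Y ω ≤ t})).toReal from hFeq t]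
        refine h2.congr fun n => ?_
        simp [Function.comp, hFeq]
      have e2 : Tendsto (fun n : ℕ => F (t + 1/((n:ℝ)+1))) atTop (nhds (p * G t)) :=
        (hGlim2.const_mul p).congr fun n => (hseq n).symm
      exact tendsto_nhds_unique hFlim2 e2
  -- conclude in ℝ≥0∞
  intro t
  have h1 : (P (A' ∩ {ω | Y ω ≤ t})).toReal = (P A' * P {ω | Y ω ≤ t}).toReal := by
    rw [← hFeq, hFpG, hGeq, hpeq, ENNReal.toReal_mul]
  exact (ENNReal.toReal_eq_toReal_iff' (measure_ne_top P _)
    (ENNReal.mul_ne_top (measure_ne_top P _) (measure_ne_top P _))).mp h1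


theorem stmt_15 {Ω : Type*} [MeasurableSpace Ω] (P : Measure Ω) [IsProbabilityMeasure P]
    (X Y : Ω → ℝ) (hX : Measurable X) (hY : Measurable Y)
    (a₁ a₂ : ℝ) (ha : a₁ < a₂)
    (hXval : ∀ ω, X ω = a₁ ∨ X ω = a₂)
    (hXa₁ : 0 < P {ω | X ω = a₁}) (hXa₂ : 0 < P {ω | X ω = a₂})
    (hYint : Integrable Y P) :
    (∀ A B : Set ℝ, MeasurableSet A → MeasurableSet B →
      P ({ω | X ω ∈ A} ∩ {ω | Y ω ∈ B}) = P {ω | X ω ∈ A} * P {ω | Y ω ∈ B}) ↔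
    ∀ t : ℝ, 0 < P {ω | Y ω ≤ t} →
      cexp P {ω | Y ω ≤ t} (fun ω => X ω * Y ω)
        = cexp P {ω | Y ω ≤ t} X * cexp P {ω | Y ω ≤ t} Y := by
  have hA'm : MeasurableSet {ω | X ω = a₂} := hX (measurableSet_singleton a₂)
  have hsetA : {ω | X ω ∈ ({a₂} : Set ℝ)} = {ω | X ω = a₂} := by ext ω; simp
  constructor
  · intro hind t ht
    have hU : MeasurableSet {ω | Y ω ≤ t} := hY measurableSet_Iic
    have hg : (0:ℝ) < (P {ω | Y ω ≤ t}).toReal :=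
      ENNReal.toReal_pos (ne_of_gt ht) (measure_ne_top P _)
    have hmap : Measure.map Y (P.restrict {ω | X ω = a₂})
        = P {ω | X ω = a₂} • Measure.map Y P := by
      refine Measure.ext fun s hs => ?_
      rw [Measure.map_apply hY hs, Measure.restrict_apply (hY hs), Measure.smul_apply,
        Measure.map_apply hY hs, smul_eq_mul, inter_comm]
      have h3 := hind {a₂} s (measurableSet_singleton _) hs
      rw [hsetA] at h3
      exact h3
    have hfac := setint_factor P Y hY {ω | X ω = a₂} hA'm hmap (Iic t) measurableSet_Iic
    have hsplit := split_integrals P X Y hX a₁ a₂ (ne_of_lt ha) hXval hYint _ hU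
    have hPAU : (P ({ω | X ω = a₂} ∩ {ω | Y ω ≤ t})).toReal
        = (P {ω | X ω = a₂}).toReal * (P {ω | Y ω ≤ t}).toReal := by
      have h3 := hind {a₂} (Iic t) (measurableSet_singleton _) measurableSet_Iic
      rw [hsetA] at h3
      rw [show ({ω | X ω = a₂} ∩ {ω | Y ω ≤ t})
          = ({ω | X ω = a₂} ∩ {ω | Y ω ∈ Iic t}) from rfl, h3, ENNReal.toReal_mul]
      rfl
    simp only [cexp]
    rw [hsplit.1, hsplit.2, hPAU]
    rw [show (∫ ω in {ω | X ω = a₂} ∩ {ω | Y ω ≤ t}, Y ω ∂P)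
      = (P {ω | X ω = a₂}).toReal * ∫ ω in {ω | Y ω ≤ t}, Y ω ∂P from hfac]
    have hgne : (P {ω | Y ω ≤ t}).toReal ≠ 0 := ne_of_gt hg
    field_simp
  · intro hcexp
    have hkey := reverse_core P X Y hX hY a₁ a₂ ha hXval hYint hcexp
      {ω | X ω = a₂} rfl ((P {ω | X ω = a₂}).toReal) rfl
      (fun t => (P ({ω | X ω = a₂} ∩ {ω | Y ω ≤ t})).toReal)
      (fun t => (P {ω | Y ω ≤ t}).toReal)
      (fun t => ∫ ω in {ω | Y ω ≤ t}, Y ω ∂P)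
      (fun t => ∫ ω in {ω | X ω = a₂} ∩ {ω | Y ω ≤ t}, Y ω ∂P)
      (fun t => t * (P ({ω | X ω = a₂} ∩ {ω | Y ω ≤ t})).toReal
        - (∫ ω in {ω | X ω = a₂} ∩ {ω | Y ω ≤ t}, Y ω ∂P)
        - (P {ω | X ω = a₂}).toReal * (t * (P {ω | Y ω ≤ t}).toReal
          - ∫ ω in {ω | Y ω ≤ t}, Y ω ∂P))
      (fun t => rfl) (fun t => rfl) (fun t => rfl) (fun t => rfl) (fun t => rfl)
    have hmap : Measure.map Y (P.restrict {ω | X ω = a₂})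
        = P {ω | X ω = a₂} • Measure.map Y P := by
      haveI : IsFiniteMeasure (Measure.map Y (P.restrict {ω | X ω = a₂})) :=
        Measure.isFiniteMeasure_map _ _
      apply Measure.ext_of_Iic
      intro a
      rw [Measure.map_apply hY measurableSet_Iic,
        Measure.restrict_apply (hY measurableSet_Iic), Measure.smul_apply,
        Measure.map_apply hY measurableSet_Iic, smul_eq_mul, inter_comm]
      exact hkey a
    have hall : ∀ s : Set ℝ, MeasurableSet s →
        P ({ω | X ω = a₂} ∩ Y ⁻¹' s) = P {ω | X ω = a₂} * P (Y ⁻¹' s) := by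
      intro s hs
      have h1 : Measure.map Y (P.restrict {ω | X ω = a₂}) s
          = (P {ω | X ω = a₂} • Measure.map Y P) s := by rw [hmap]
      rw [Measure.map_apply hY hs, Measure.restrict_apply (hY hs), Measure.smul_apply,
        Measure.map_apply hY hs, smul_eq_mul, inter_comm] at h1
      exact h1
    intro A B hA hB
    have hYB : {ω | Y ω ∈ B} = Y ⁻¹' B := rfl
    by_cases h1 : a₁ ∈ A <;> by_cases h2 : a₂ ∈ A
    · have hXA : {ω | X ω ∈ A} = univ := by
        apply eq_univ_of_forall
        intro ω
        show X ω ∈ A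
        rcases hXval ω with hx | hx <;> rw [hx] <;> assumption
      rw [hXA, univ_inter, measure_univ, one_mul]
    · have hXA : {ω | X ω ∈ A} = {ω | X ω = a₂}ᶜ := by
        ext ω
        simp only [mem_setOf_eq, mem_compl_iff]
        constructor
        · intro hx hx2
          rw [hx2] at hx
          exact h2 hx
        · intro hx2
          rcases hXval ω with hx | hx
          · rw [hx]; exact h1
          · exact absurd hx hx2
      rw [hXA]
      have e1 : P ({ω | Y ω ∈ B} ∩ {ω | X ω = a₂})
          + P ({ω | Y ω ∈ B} \ {ω | X ω = a₂}) = P {ω | Y ω ∈ B} :=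
        measure_inter_add_diff _ hA'm
      have e2 : (P {ω | X ω = a₂} + P {ω | X ω = a₂}ᶜ) = 1 := by
        rw [measure_add_measure_compl hA'm, measure_univ]
      have e3 : P ({ω | X ω = a₂} ∩ {ω | Y ω ∈ B})
          = P {ω | X ω = a₂} * P {ω | Y ω ∈ B} := hall B hB
      have e4 : P ({ω | Y ω ∈ B} \ {ω | X ω = a₂})
          = P ({ω | X ω = a₂}ᶜ ∩ {ω | Y ω ∈ B}) := by
        rw [diff_eq, inter_comm]
      have e5 : P {ω | X ω = a₂} * P {ω | Y ω ∈ B}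
          + P {ω | X ω = a₂}ᶜ * P {ω | Y ω ∈ B} = P {ω | Y ω ∈ B} := by
        rw [← add_mul, e2, one_mul]
      rw [inter_comm, e3, e4] at e1
      exact (ENNReal.add_right_inj (ENNReal.mul_ne_top (measure_ne_top P _)
        (measure_ne_top P _))).mp (e1.trans e5.symm)
    · have hXA : {ω | X ω ∈ A} = {ω | X ω = a₂} := by
        ext ω
        simp only [mem_setOf_eq]
        constructor
        · intro hx
          rcases hXval ω with hx1 | hx1
          · rw [hx1] at hx; exact absurd hx h1
          · exact hx1
        · intro hx; rw [hx]; exact h2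
      rw [hXA]
      exact hall B hB
    · have hXA : {ω | X ω ∈ A} = ∅ := by
        apply eq_empty_iff_forall_notMem.mpr
        intro ω hx
        rcases hXval ω with hx1 | hx1
        · rw [mem_setOf_eq, hx1] at hx; exact h1 hx
        · rw [mem_setOf_eq, hx1] at hx; exact h2 hx
      rw [hXA, empty_inter, measure_empty, zero_mul]
end

section
/- Let X and Y be real-valued random variables with E|X| < ∞, E|Y| < ∞ and ℙ(Y > 0) = 1. Suppose that for every pair of bounded closed intervals A, B with ℙ(X ∈ A, Y ∈ B) > 0, setting U = {X ∈ A, Y ∈ B}, one has E[XY | U] = E[X | U] · E[Y | U]. Then for every Borel set A ⊆ ℝ and every bounded closed interval B with ℙ(X ∈ A, Y ∈ B) > 0, one has E[Y | X ∈ A, Y ∈ B] = E[Y | Y ∈ B]. -/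
open MeasureTheory Set

open Metric Filter Topology
open scoped ENNReal NNReal

namespace Stmt16Aux
lemma aedisj (ρ : Measure ℝ) {p q r : ℝ} (hq : ρ {q} = 0) :
    MeasureTheory.AEDisjoint ρ (Icc p q) (Icc q r) := by
  refine measure_mono_null ?_ hq
  rintro x ⟨⟨_, h1⟩, ⟨h2, _⟩⟩
  exact mem_singleton_iff.2 (le_antisymm h1 h2)

lemma meas_split (ρ : Measure ℝ) [IsFiniteMeasure ρ] {p q r : ℝ} (hpq : p ≤ q) (hqr : q ≤ r)
    (hq : ρ {q} = 0) :
    (ρ (Icc p r)).toReal = (ρ (Icc p q)).toReal + (ρ (Icc q r)).toReal := by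
  rw [← Icc_union_Icc_eq_Icc hpq hqr,
    measure_union₀ measurableSet_Icc.nullMeasurableSet (aedisj ρ hq),
    ENNReal.toReal_add (measure_ne_top _ _) (measure_ne_top _ _)]

lemma int_split (ρ : Measure ℝ) [IsFiniteMeasure ρ] {p q r : ℝ} (hpq : p ≤ q) (hqr : q ≤ r)
    (hq : ρ {q} = 0) :
    ∫ x in Icc p r, x ∂ρ = (∫ x in Icc p q, x ∂ρ) + ∫ x in Icc q r, x ∂ρ := by
  rw [← Icc_union_Icc_eq_Icc hpq hqr]
  exact integral_union_ae (aedisj ρ hq) measurableSet_Icc.nullMeasurableSet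
      continuous_id.integrableOn_Icc continuous_id.integrableOn_Icc

lemma mom_le (ρ : Measure ℝ) [IsFiniteMeasure ρ] {p q : ℝ} :
    ∫ x in Icc p q, x ∂ρ ≤ q * (ρ (Icc p q)).toReal := by
  have h := setIntegral_mono_on (μ := ρ) (s := Icc p q) (f := fun x : ℝ => x) (g := fun _ => q)
    continuous_id.integrableOn_Icc
    (integrableOn_const (measure_ne_top _ _)) measurableSet_Icc
    (fun x hx => hx.2)
  simpa [mul_comm, measureReal_def] using h

lemma le_mom (ρ : Measure ℝ) [IsFiniteMeasure ρ] {p q : ℝ} :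
    p * (ρ (Icc p q)).toReal ≤ ∫ x in Icc p q, x ∂ρ := by
  have h := setIntegral_mono_on (μ := ρ) (s := Icc p q) (f := fun _ : ℝ => p) (g := fun x : ℝ => x)
    (integrableOn_const (measure_ne_top _ _))
    continuous_id.integrableOn_Icc measurableSet_Icc
    (fun x hx => hx.1)
  simpa [mul_comm, measureReal_def] using h


lemma hE_lemma (μ ν : Measure ℝ) [IsFiniteMeasure μ] [IsFiniteMeasure ν]
    (hν_atom : ∀ x : ℝ, μ {x} = 0 → ν {x} = 0)
    (hC : ∀ p q : ℝ, (∫ x in Icc p q, x ∂ν) * (μ (Icc p q)).toReal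
        = (∫ x in Icc p q, x ∂μ) * (ν (Icc p q)).toReal)
    {p q r s : ℝ} (hpq : p ≤ q) (hqr : q ≤ r) (hrs : r ≤ s)
    (hq : μ {q} = 0) (hr : μ {r} = 0) :
    (∫ x in Icc p q, x ∂ν) * (μ (Icc r s)).toReal
      + (∫ x in Icc r s, x ∂ν) * (μ (Icc p q)).toReal
    = (∫ x in Icc p q, x ∂μ) * (ν (Icc r s)).toReal
      + (∫ x in Icc r s, x ∂μ) * (ν (Icc p q)).toReal := by
  have hq' : ν {q} = 0 := hν_atom q hq
  have hr' : ν {r} = 0 := hν_atom r hr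
  have hqs : q ≤ s := hqr.trans hrs
  have h2 := hC q r
  have h12 := hC p r
  have h23 := hC q s
  have h123 := hC p s
  rw [meas_split μ hpq hqr hq, int_split μ hpq hqr hq,
    meas_split ν hpq hqr hq', int_split ν hpq hqr hq'] at h12
  rw [meas_split μ hqr hrs hr, int_split μ hqr hrs hr,
    meas_split ν hqr hrs hr', int_split ν hqr hrs hr'] at h23
  rw [meas_split μ hpq hqs hq, int_split μ hpq hqs hq,
    meas_split ν hpq hqs hq', int_split ν hpq hqs hq',
    meas_split μ hqr hrs hr, int_split μ hqr hrs hr,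
    meas_split ν hqr hrs hr', int_split ν hqr hrs hr'] at h123
  linear_combination h123 - h12 - h23 + h2


lemma PB_algebra (aI aJ bI bJ maI maJ mbI mbJ M u v ε : ℝ)
    (hM : 0 ≤ M) (hε : 0 < ε) (hgap : u + ε < v - ε)
    (haI : 0 ≤ aI) (haJ : 0 ≤ aJ) (hbI : 0 ≤ bI) (hbJ : 0 ≤ bJ)
    (hBAI : bI ≤ M * aI) (hBAJ : bJ ≤ M * aJ)
    (hmom1 : mbI ≤ (u + ε) * bI) (hmom2 : (u - ε) * bI ≤ mbI)
    (hmom3 : maI ≤ (u + ε) * aI) (hmom4 : (u - ε) * aI ≤ maI)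
    (hmom5 : mbJ ≤ (v + ε) * bJ) (hmom6 : (v - ε) * bJ ≤ mbJ)
    (hmom7 : maJ ≤ (v + ε) * aJ) (hmom8 : (v - ε) * aJ ≤ maJ)
    (hE : mbI * aJ + mbJ * aI = maI * bJ + maJ * bI) :
    |bI * aJ - aI * bJ| * (v - u - 2 * ε) ≤ 8 * ε * M * (aI * aJ) := by
  have hgap0 : 0 ≤ v - u - 2 * ε := by linarith
  rw [← abs_of_nonneg hgap0, ← abs_mul]
  have key : (bI * aJ - aI * bJ) * (v - u - 2 * ε)
      = (mbJ - (v - ε) * bJ) * aI + ((u + ε) * aI - maI) * bJ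
        - ((u + ε) * bI - mbI) * aJ - (maJ - (v - ε) * aJ) * bI := by
    linear_combination -hE
  rw [abs_le]
  constructor <;> nlinarith [mul_nonneg haI hbJ, mul_nonneg haJ hbI,
    mul_nonneg (mul_nonneg hM haI) haJ, mul_nonneg haI haJ,
    mul_le_mul_of_nonneg_right hBAI haJ, mul_le_mul_of_nonneg_right hBAJ haI,
    mul_le_mul_of_nonneg_left (sub_nonneg.2 hmom6) haI,
    mul_le_mul_of_nonneg_right (sub_nonneg.2 hmom6) haI,
    mul_le_mul_of_nonneg_right (show mbJ - (v-ε)*bJ ≤ 2*ε*bJ by linarith) haI,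
    mul_le_mul_of_nonneg_right (show (u+ε)*aI - maI ≤ 2*ε*aI by linarith) hbJ,
    mul_le_mul_of_nonneg_right (show (u+ε)*bI - mbI ≤ 2*ε*bI by linarith) haJ,
    mul_le_mul_of_nonneg_right (show maJ - (v-ε)*aJ ≤ 2*ε*aJ by linarith) hbI,
    mul_le_mul_of_nonneg_right (show 0 ≤ mbJ - (v-ε)*bJ by linarith) haI,
    mul_le_mul_of_nonneg_right (show 0 ≤ (u+ε)*aI - maI by linarith) hbJ,
    mul_le_mul_of_nonneg_right (show 0 ≤ (u+ε)*bI - mbI by linarith) haJ,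
    mul_le_mul_of_nonneg_right (show 0 ≤ maJ - (v-ε)*aJ by linarith) hbI,
    mul_le_mul_of_nonneg_right (mul_le_mul_of_nonneg_left hBAJ (le_of_lt hε)) haI,
    mul_le_mul_of_nonneg_right (mul_le_mul_of_nonneg_left hBAI (le_of_lt hε)) haJ]


-- atoms countable
lemma atoms_countable (μ : Measure ℝ) [IsFiniteMeasure μ] : Set.Countable {x : ℝ | μ {x} ≠ 0} := by
  have h := MeasureTheory.Measure.countable_meas_pos_of_disjoint_iUnion (μ := μ)
    (As := fun x : ℝ => {x}) (fun x => measurableSet_singleton x)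
    (fun x y hxy => by simp [Function.onFun, hxy])
  refine h.mono ?_
  intro x hx
  simpa [pos_iff_ne_zero] using hx

-- support a.e.
lemma ae_supp (μ : Measure ℝ) [IsFiniteMeasure μ] :
    ∀ᵐ u ∂μ, ∀ ε : ℝ, 0 < ε → μ (closedBall u ε) ≠ 0 := by
  rw [ae_iff]
  refine measure_mono_null
    (t := ⋃ (q : ℚ) (r : ℚ) (_ : μ (ball (q:ℝ) (r:ℝ)) = 0), ball (q:ℝ) (r:ℝ)) ?_
    (measure_iUnion_null fun q : ℚ => measure_iUnion_null fun r : ℚ =>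
      measure_iUnion_null fun h => h)
  intro u hu
  simp only [mem_setOf_eq] at hu
  push_neg at hu
  obtain ⟨ε, hε, hμε⟩ := hu
  obtain ⟨q, hq1, hq2⟩ := exists_rat_btwn (show u - ε/4 < u by linarith)
  have hdq : dist u (q : ℝ) < ε/4 := by
    rw [Real.dist_eq, abs_lt]; constructor <;> linarith
  obtain ⟨r, hr1, hr2⟩ := exists_rat_btwn (show dist u (q:ℝ) < ε/2 by linarith)
  refine mem_iUnion.2 ⟨q, mem_iUnion.2 ⟨r, mem_iUnion.2 ⟨?_, ?_⟩⟩⟩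
  · refine measure_mono_null ?_ hμε
    intro x hx
    rw [mem_ball] at hx
    rw [mem_closedBall]
    calc dist x u ≤ dist x (q:ℝ) + dist (q:ℝ) u := dist_triangle _ _ _
    _ ≤ r + r := by rw [dist_comm (q:ℝ) u]; push_cast; linarith
    _ ≤ ε := by push_cast at hr2 ⊢; linarith
  · rw [mem_ball]; exact hr1


lemma abs_key (μ ν : Measure ℝ) [IsFiniteMeasure μ] [IsFiniteMeasure ν] {M : ℝ} (hM : 0 ≤ M) (hle : ν ≤ (ENNReal.ofReal M) • μ)
    (hC : ∀ p q : ℝ, (∫ x in Icc p q, x ∂ν) * (μ (Icc p q)).toReal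
        = (∫ x in Icc p q, x ∂μ) * (ν (Icc p q)).toReal)
    (hμ0 : μ ≠ 0) :
    ∃ k : ℝ≥0∞, k ≠ ⊤ ∧ ν = k • μ := by
  have hleS : ∀ S : Set ℝ, ν S ≤ ENNReal.ofReal M * μ S := by
    intro S
    simpa [Measure.smul_apply, smul_eq_mul] using (Measure.le_iff'.1 hle) S
  have hν_atom : ∀ x : ℝ, μ {x} = 0 → ν {x} = 0 := by
    intro x hx
    have := hleS {x}
    rw [hx, mul_zero] at this
    exact le_antisymm this (zero_le)
  have hBA : ∀ S : Set ℝ, (ν S).toReal ≤ M * (μ S).toReal := by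
    intro S
    have h1 := hleS S
    have h2 : (ENNReal.ofReal M * μ S).toReal = M * (μ S).toReal := by
      rw [ENNReal.toReal_mul, ENNReal.toReal_ofReal hM]
    calc (ν S).toReal ≤ (ENNReal.ofReal M * μ S).toReal :=
          ENNReal.toReal_mono (by finiteness) h1
      _ = M * (μ S).toReal := h2
  -- pairwise bound
  have hPB : ∀ u v ε : ℝ, 0 < ε → u + ε < v - ε → μ {u + ε} = 0 → μ {v - ε} = 0 →
      |(ν (Icc (u-ε) (u+ε))).toReal * (μ (Icc (v-ε) (v+ε))).toReal
        - (μ (Icc (u-ε) (u+ε))).toReal * (ν (Icc (v-ε) (v+ε))).toReal| * (v - u - 2*ε)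
      ≤ 8 * ε * M * ((μ (Icc (u-ε) (u+ε))).toReal * (μ (Icc (v-ε) (v+ε))).toReal) := by
    intro u v ε hε hgap hq hr
    have hE := hE_lemma μ ν hν_atom hC
      (show u - ε ≤ u + ε by linarith) (le_of_lt hgap) (show v - ε ≤ v + ε by linarith) hq hr
    exact PB_algebra _ _ _ _ _ _ _ _ M u v ε hM hε hgap
      ENNReal.toReal_nonneg ENNReal.toReal_nonneg ENNReal.toReal_nonneg ENNReal.toReal_nonneg
      (hBA _) (hBA _) (mom_le ν) (le_mom ν) (mom_le μ) (le_mom μ)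
      (mom_le ν) (le_mom ν) (mom_le μ) (le_mom μ) (by linarith [hE])
  -- differentiation
  have hae := ((Besicovitch.ae_tendsto_rnDeriv ν μ).and
    ((Measure.rnDeriv_lt_top ν μ).and (ae_supp μ)))
  have hcnt := atoms_countable μ
  -- main comparison
  have main : ∀ u v : ℝ, u < v →
      (Tendsto (fun r => ν (closedBall u r) / μ (closedBall u r)) (𝓝[>] 0)
        (𝓝 (ν.rnDeriv μ u)) ∧ ν.rnDeriv μ u < ⊤ ∧ ∀ ε : ℝ, 0 < ε → μ (closedBall u ε) ≠ 0) →
      (Tendsto (fun r => ν (closedBall v r) / μ (closedBall v r)) (𝓝[>] 0)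
        (𝓝 (ν.rnDeriv μ v)) ∧ ν.rnDeriv μ v < ⊤ ∧ ∀ ε : ℝ, 0 < ε → μ (closedBall v ε) ≠ 0) →
      ν.rnDeriv μ u = ν.rnDeriv μ v := by
    intro u v huv ⟨hu1, hu2, hu3⟩ ⟨hv1, hv2, hv3⟩
    -- bad parameter set
    set D : Set ℝ := {ε : ℝ | μ {u + ε} ≠ 0 ∨ μ {v - ε} ≠ 0} with hD
    have hDc : D.Countable := by
      have h1 : D ⊆ ((fun x => x - u) '' {x : ℝ | μ {x} ≠ 0}) ∪
          ((fun x => v - x) '' {x : ℝ | μ {x} ≠ 0}) := by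
        rintro ε (hε | hε)
        · exact Or.inl ⟨u + ε, hε, by ring⟩
        · exact Or.inr ⟨v - ε, hε, by ring⟩
      exact Set.Countable.mono h1 ((hcnt.image _).union (hcnt.image _))
    have hch : ∀ n : ℕ, ∃ ε : ℝ,
        (0 < ε ∧ ε < min ((v - u)/4) (1/(n+1))) ∧ ε ∉ D := by
      intro n
      have hδ : (0:ℝ) < min ((v - u)/4) (1/(n+1)) := lt_min (by linarith) (by positivity)
      by_contra hcon
      push_neg at hcon
      have hsub : Ioo (0:ℝ) (min ((v - u)/4) (1/(n+1))) ⊆ D := fun ε hε =>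
        hcon ε ⟨hε.1, hε.2⟩
      have hv0 : (volume : Measure ℝ) (Ioo (0:ℝ) (min ((v - u)/4) (1/(n+1)))) = 0 :=
        measure_mono_null hsub (Set.Countable.measure_zero hDc _)
      rw [Real.volume_Ioo] at hv0
      simp only [ENNReal.ofReal_eq_zero] at hv0
      linarith
    choose e he1 he2 using hch
    have hepos : ∀ n, 0 < e n := fun n => (he1 n).1
    have heq : ∀ n, μ {u + e n} = 0 := by
      intro n; have := he2 n; rw [hD] at this; simp only [mem_setOf_eq, not_or, not_not] at this
      exact this.1
    have her : ∀ n, μ {v - e n} = 0 := by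
      intro n; have := he2 n; rw [hD] at this; simp only [mem_setOf_eq, not_or, not_not] at this
      exact this.2
    have hesmall : ∀ n, e n < (v - u)/4 := fun n => lt_of_lt_of_le (he1 n).2 (min_le_left _ _)
    have he0 : Tendsto e atTop (𝓝 0) := by
      apply squeeze_zero (fun n => (hepos n).le)
        (fun n => le_of_lt (lt_of_lt_of_le (he1 n).2 (min_le_right _ _)))
      exact tendsto_one_div_add_atTop_nhds_zero_nat
    have hewithin : Tendsto e atTop (𝓝[>] 0) :=
      tendsto_nhdsWithin_of_tendsto_nhds_of_eventually_within e he0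
        (Eventually.of_forall fun n => mem_Ioi.2 (hepos n))
    -- ratio sequences
    set Fu : ℕ → ℝ := fun n =>
      (ν (closedBall u (e n))).toReal / (μ (closedBall u (e n))).toReal with hFu
    set Fv : ℕ → ℝ := fun n =>
      (ν (closedBall v (e n))).toReal / (μ (closedBall v (e n))).toReal with hFv
    have hFut : Tendsto Fu atTop (𝓝 (ν.rnDeriv μ u).toReal) := by
      have h1 : Tendsto (fun n => ν (closedBall u (e n)) / μ (closedBall u (e n)))
          atTop (𝓝 (ν.rnDeriv μ u)) := hu1.comp hewithin
      have h2 := (ENNReal.tendsto_toReal hu2.ne).comp h1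
      simpa [hFu, Function.comp_def, ENNReal.toReal_div] using h2
    have hFvt : Tendsto Fv atTop (𝓝 (ν.rnDeriv μ v).toReal) := by
      have h1 : Tendsto (fun n => ν (closedBall v (e n)) / μ (closedBall v (e n)))
          atTop (𝓝 (ν.rnDeriv μ v)) := hv1.comp hewithin
      have h2 := (ENNReal.tendsto_toReal hv2.ne).comp h1
      simpa [hFv, Function.comp_def, ENNReal.toReal_div] using h2
    -- difference bound
    have hbound : ∀ n, |Fu n - Fv n| ≤ 8 * e n * M / ((v - u)/2) := by
      intro n
      have hgap : u + e n < v - e n := by have := hesmall n; linarith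
      have hIcc_u : closedBall u (e n) = Icc (u - e n) (u + e n) := Real.closedBall_eq_Icc
      have hIcc_v : closedBall v (e n) = Icc (v - e n) (v + e n) := Real.closedBall_eq_Icc
      have hPBn := hPB u v (e n) (hepos n) hgap (heq n) (her n)
      rw [← hIcc_u, ← hIcc_v] at hPBn
      set aI := (μ (closedBall u (e n))).toReal
      set aJ := (μ (closedBall v (e n))).toReal
      set bI := (ν (closedBall u (e n))).toReal
      set bJ := (ν (closedBall v (e n))).toReal
      have haI : 0 < aI := ENNReal.toReal_pos (hu3 _ (hepos n)) (measure_ne_top _ _)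
      have haJ : 0 < aJ := ENNReal.toReal_pos (hv3 _ (hepos n)) (measure_ne_top _ _)
      have hdiff : Fu n - Fv n = (bI * aJ - aI * bJ) / (aI * aJ) := by
        rw [hFu, hFv]
        rw [div_sub_div _ _ haI.ne' haJ.ne']
      rw [hdiff, abs_div, abs_of_pos (mul_pos haI haJ)]
      rw [div_le_div_iff₀ (mul_pos haI haJ) (by linarith : (0:ℝ) < (v - u)/2)]
      calc |bI * aJ - aI * bJ| * ((v - u)/2)
          ≤ |bI * aJ - aI * bJ| * (v - u - 2 * e n) := by
            apply mul_le_mul_of_nonneg_left _ (abs_nonneg _)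
            have := hesmall n; linarith
        _ ≤ 8 * e n * M * (aI * aJ) := hPBn
        _ = 8 * e n * M * (aI * aJ) := rfl
    have hrhs0 : Tendsto (fun n => 8 * e n * M / ((v - u)/2)) atTop (𝓝 0) := by
      have h1 : Tendsto (fun n => 8 * e n * M / ((v - u)/2)) atTop
          (𝓝 (8 * 0 * M / ((v - u)/2))) := by
        exact (((tendsto_const_nhds (x := (8:ℝ))).mul he0).mul tendsto_const_nhds).div_const _
      simpa using h1
    have hzero : Tendsto (fun n => Fu n - Fv n) atTop (𝓝 0) := by
      apply squeeze_zero_norm (fun n => by simpa [Real.norm_eq_abs] using hbound n) hrhs0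
    have hsub : Tendsto (fun n => Fu n - Fv n) atTop
        (𝓝 ((ν.rnDeriv μ u).toReal - (ν.rnDeriv μ v).toReal)) := hFut.sub hFvt
    have heqr : (ν.rnDeriv μ u).toReal = (ν.rnDeriv μ v).toReal := by
      have := tendsto_nhds_unique hsub hzero
      linarith [this]
    exact (ENNReal.toReal_eq_toReal_iff' hu2.ne hv2.ne).1 heqr
  -- conclude constancy
  have hne : (ae μ).NeBot := ae_neBot.2 hμ0
  obtain ⟨u₀, hu₀⟩ := hae.exists
  have haec : ∀ᵐ x ∂μ, ν.rnDeriv μ x = ν.rnDeriv μ u₀ := by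
    filter_upwards [hae] with x hx
    rcases lt_trichotomy u₀ x with hlt | heq | hlt
    · exact (main u₀ x hlt hu₀ hx).symm
    · rw [heq]
    · exact main x u₀ hlt hx hu₀
  have hac : ν ≪ μ := by
    refine Measure.AbsolutelyContinuous.mk fun S hSm hS0 => ?_
    have := hleS S
    rw [hS0, mul_zero] at this
    exact le_antisymm this (zero_le)
  refine ⟨ν.rnDeriv μ u₀, hu₀.2.1.ne, ?_⟩
  calc ν = μ.withDensity (ν.rnDeriv μ) := (Measure.withDensity_rnDeriv_eq ν μ hac).symm
    _ = μ.withDensity (fun _ => ν.rnDeriv μ u₀) := withDensity_congr_ae haec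
    _ = (ν.rnDeriv μ u₀) • μ := withDensity_const _


end Stmt16Aux

open Stmt16Aux

theorem stmt_16 {Ω : Type*} [MeasurableSpace Ω] (P : Measure Ω) [IsProbabilityMeasure P]
    (X Y : Ω → ℝ) (hX : Measurable X) (hY : Measurable Y)
    (hXint : Integrable X P) (hYint : Integrable Y P)
    (hYpos : P {ω | 0 < Y ω} = 1)
    (h : ∀ a b c d : ℝ, 0 < P {ω | X ω ∈ Icc a b ∧ Y ω ∈ Icc c d} →
      cexp P {ω | X ω ∈ Icc a b ∧ Y ω ∈ Icc c d} (fun ω => X ω * Y ω)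
        = cexp P {ω | X ω ∈ Icc a b ∧ Y ω ∈ Icc c d} X
          * cexp P {ω | X ω ∈ Icc a b ∧ Y ω ∈ Icc c d} Y) :
    ∀ A : Set ℝ, MeasurableSet A → ∀ c d : ℝ,
      0 < P {ω | X ω ∈ A ∧ Y ω ∈ Icc c d} →
      cexp P {ω | X ω ∈ A ∧ Y ω ∈ Icc c d} Y = cexp P {ω | Y ω ∈ Icc c d} Y := by
  intro A hA c d hpos
  -- basic setup
  have hY0 : ∀ᵐ ω ∂P, 0 ≤ Y ω := by
    have hmeas : MeasurableSet {ω | 0 < Y ω} := hY measurableSet_Ioi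
    have hcompl : P {ω | 0 < Y ω}ᶜ = 0 := by
      rw [measure_compl hmeas (measure_ne_top _ _), hYpos, measure_univ, tsub_self]
    rw [ae_iff]
    refine measure_mono_null ?_ hcompl
    intro ω hω
    simp only [mem_setOf_eq, not_le] at hω
    simp only [mem_compl_iff, mem_setOf_eq, not_lt]
    linarith
  set M : ℝ := max d 0 with hM
  have hM0 : 0 ≤ M := le_max_right _ _
  set V : Set Ω := Y ⁻¹' (Icc c d) with hVdef
  have hVm : MeasurableSet V := hY measurableSet_Icc
  set Q : Measure Ω := P.restrict V with hQ
  set w : Ω → ℝ≥0∞ := fun ω => ENNReal.ofReal (Y ω) with hw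
  have hwm : Measurable w := ENNReal.measurable_ofReal.comp hY
  set μ : Measure ℝ := Q.map X with hμ
  set ν : Measure ℝ := (Q.withDensity w).map X with hν
  -- event identification
  have hev : ∀ S : Set ℝ, {ω | X ω ∈ S ∧ Y ω ∈ Icc c d} = X ⁻¹' S ∩ V := by
    intro S; ext ω; simp [hVdef, mem_preimage]
  -- finiteness
  have hwb : ∀ᵐ ω ∂Q, w ω ≤ ENNReal.ofReal M := by
    filter_upwards [ae_restrict_mem hVm] with ω hω
    exact ENNReal.ofReal_le_ofReal (le_trans hω.2 (le_max_left _ _))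
  haveI : IsFiniteMeasure (Q.withDensity w) := by
    constructor
    rw [withDensity_apply _ MeasurableSet.univ, Measure.restrict_univ]
    calc ∫⁻ ω, w ω ∂Q ≤ ∫⁻ _, ENNReal.ofReal M ∂Q := lintegral_mono_ae hwb
      _ = ENNReal.ofReal M * Q univ := lintegral_const _
      _ < ⊤ := ENNReal.mul_lt_top ENNReal.ofReal_lt_top (measure_lt_top _ _)
  haveI : IsFiniteMeasure μ := by
    constructor
    rw [hμ, Measure.map_apply hX MeasurableSet.univ]
    exact measure_lt_top _ _
  haveI : IsFiniteMeasure ν := by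
    constructor
    rw [hν, Measure.map_apply hX MeasurableSet.univ]
    exact measure_lt_top _ _
  -- bridges
  have hμap : ∀ S : Set ℝ, MeasurableSet S → μ S = P (X ⁻¹' S ∩ V) := by
    intro S hS
    rw [hμ, Measure.map_apply hX hS, hQ, Measure.restrict_apply (hX hS)]
  have hνap : ∀ S : Set ℝ, MeasurableSet S → ν S = ∫⁻ ω in X ⁻¹' S ∩ V, w ω ∂P := by
    intro S hS
    rw [hν, Measure.map_apply hX hS, withDensity_apply _ (hX hS), hQ,
      Measure.restrict_restrict (hX hS)]
  have hb : ∀ S : Set ℝ, MeasurableSet S → (ν S).toReal = ∫ ω in X ⁻¹' S ∩ V, Y ω ∂P := by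
    intro S hS
    rw [hνap S hS]
    have hint : Integrable Y (P.restrict (X ⁻¹' S ∩ V)) := hYint.restrict
    have hnn : 0 ≤ᵐ[P.restrict (X ⁻¹' S ∩ V)] Y := ae_restrict_of_ae hY0
    rw [← ofReal_integral_eq_lintegral_ofReal hint hnn,
      ENNReal.toReal_ofReal (integral_nonneg_of_ae hnn)]
  have hmA : ∀ S : Set ℝ, MeasurableSet S →
      ∫ x in S, x ∂μ = ∫ ω in X ⁻¹' S ∩ V, X ω ∂P := by
    intro S hS
    rw [hμ, setIntegral_map (f := fun x : ℝ => x) hS aestronglyMeasurable_id hX.aemeasurable, hQ,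
      Measure.restrict_restrict (hX hS)]
  have hmB : ∀ S : Set ℝ, MeasurableSet S →
      ∫ x in S, x ∂ν = ∫ ω in X ⁻¹' S ∩ V, X ω * Y ω ∂P := by
    intro S hS
    rw [hν, setIntegral_map (f := fun x : ℝ => x) hS aestronglyMeasurable_id hX.aemeasurable]
    have hres : (Q.withDensity w).restrict (X ⁻¹' S) =
        (P.restrict (X ⁻¹' S ∩ V)).withDensity w := by
      rw [restrict_withDensity (hX hS), hQ, Measure.restrict_restrict (hX hS)]
    rw [hres]
    have : ∫ ω, X ω ∂((P.restrict (X ⁻¹' S ∩ V)).withDensity w)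
        = ∫ ω, ((Y ω).toNNReal : ℝ≥0) • (X ω) ∂(P.restrict (X ⁻¹' S ∩ V)) := by
      rw [hw]
      exact integral_withDensity_eq_integral_smul (hY.real_toNNReal) _
    rw [this]
    apply integral_congr_ae
    filter_upwards [ae_restrict_of_ae hY0] with ω hω
    simp [NNReal.smul_def, Real.coe_toNNReal _ hω, mul_comm]
  -- covariance identity on intervals
  have hC : ∀ p q : ℝ, (∫ x in Icc p q, x ∂ν) * (μ (Icc p q)).toReal
      = (∫ x in Icc p q, x ∂μ) * (ν (Icc p q)).toReal := by
    intro p q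
    rw [hmA _ measurableSet_Icc, hmB _ measurableSet_Icc, hb _ measurableSet_Icc,
      hμap _ measurableSet_Icc]
    by_cases hz : P (X ⁻¹' (Icc p q) ∩ V) = 0
    · have hres : P.restrict (X ⁻¹' (Icc p q) ∩ V) = 0 := Measure.restrict_eq_zero.2 hz
      rw [hz, hres]
      simp
    · have hppos : 0 < P {ω | X ω ∈ Icc p q ∧ Y ω ∈ Icc c d} := by
        rw [hev]
        exact pos_iff_ne_zero.2 hz
      have hcx := h p q c d hppos
      rw [cexp, cexp, cexp, hev (Icc p q)] at hcx
      have htpos : 0 < (P (X ⁻¹' (Icc p q) ∩ V)).toReal :=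
        ENNReal.toReal_pos hz (measure_ne_top _ _)
      have htne : (P (X ⁻¹' (Icc p q) ∩ V)).toReal ≠ 0 := ne_of_gt htpos
      field_simp at hcx
      linear_combination hcx
  -- domination
  have hle : ν ≤ (ENNReal.ofReal M) • μ := by
    refine Measure.le_iff.2 fun S hS => ?_
    rw [hνap S hS, Measure.smul_apply, smul_eq_mul, hμap S hS]
    have hb' : ∀ᵐ ω ∂(P.restrict (X ⁻¹' S ∩ V)), w ω ≤ ENNReal.ofReal M := by
      filter_upwards [ae_restrict_mem ((hX hS).inter hVm)] with ω hω
      exact ENNReal.ofReal_le_ofReal (le_trans hω.2.2 (le_max_left _ _))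
    calc ∫⁻ ω in X ⁻¹' S ∩ V, w ω ∂P ≤ ∫⁻ _ in X ⁻¹' S ∩ V, ENNReal.ofReal M ∂P :=
        lintegral_mono_ae hb'
      _ = ENNReal.ofReal M * P (X ⁻¹' S ∩ V) := by
        rw [lintegral_const, Measure.restrict_apply_univ]
  -- nontriviality
  have hμA : μ A = P {ω | X ω ∈ A ∧ Y ω ∈ Icc c d} := by rw [hμap A hA, hev]
  have hμA0 : μ A ≠ 0 := by
    rw [hμA]
    exact ne_of_gt hpos
  have hμ0 : μ ≠ 0 := by
    intro h0
    rw [h0] at hμA0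
    simp at hμA0
  obtain ⟨k, hk, hνk⟩ := abs_key μ ν hM0 hle hC hμ0
  -- final computation
  have key : ∀ S : Set ℝ, MeasurableSet S → μ S ≠ 0 →
      cexp P (X ⁻¹' S ∩ V) Y = k.toReal := by
    intro S hS hμS
    rw [cexp, ← hb S hS, ← hμap S hS, hνk, Measure.smul_apply, smul_eq_mul,
      ENNReal.toReal_mul, mul_div_assoc, div_self, mul_one]
    exact ENNReal.toReal_ne_zero.2 ⟨hμS, measure_ne_top _ _⟩
  have huniv : {ω | Y ω ∈ Icc c d} = X ⁻¹' (univ : Set ℝ) ∩ V := by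
    ext ω
    simp [hVdef]
  have hμu0 : μ univ ≠ 0 := by
    intro h0
    exact hμA0 (le_antisymm (le_trans (measure_mono (subset_univ A)) (le_of_eq h0)) (zero_le))
  rw [hev A, huniv, key A hA hμA0, key univ MeasurableSet.univ hμu0]
end

section
/- For p ∈ (0,1), let μ_p be the Borel probability measure on ℝ with density f_p(t) = p·1_{[0,1]}(t) + (1−p)·1_{[2,3]}(t) with respect to Lebesgue measure. Then for every ε ∈ (0,1) and all p, q ∈ (0,1): (i) for every interval [a,b] with 0 < b − a < ε, μ_p([a,b]) > 0 if and only if μ_q([a,b]) > 0, and whenever these are positive, (∫_{[a,b]} x dμ_p(x))/μ_p([a,b]) = (∫_{[a,b]} x dμ_q(x))/μ_q([a,b]); (ii) nevertheless, μ_p ≠ μ_q whenever p ≠ q. In particular, the conditional first moments over intervals of length less than ε do not determine the distribution. -/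
open MeasureTheory Set

/-- The density `f_p(t) = p·1_{[0,1]}(t) + (1−p)·1_{[2,3]}(t)`. -/
noncomputable def fdens (p : ℝ) (t : ℝ) : ℝ :=
  p * (Icc (0 : ℝ) 1).indicator (fun _ => (1 : ℝ)) t
    + (1 - p) * (Icc (2 : ℝ) 3).indicator (fun _ => (1 : ℝ)) t

/-- The Borel probability measure on `ℝ` with density `f_p` w.r.t. Lebesgue measure. -/
noncomputable def μmix (p : ℝ) : Measure ℝ :=
  volume.withDensity fun t => ENNReal.ofReal (fdens p t)

open scoped ENNReal NNReal

lemma fdens_ofReal (p : ℝ) (t : ℝ) :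
    ENNReal.ofReal (fdens p t)
      = (Icc (0:ℝ) 1).indicator (fun _ => ENNReal.ofReal p) t
        + (Icc (2:ℝ) 3).indicator (fun _ => ENNReal.ofReal (1-p)) t := by
  by_cases h1 : t ∈ Icc (0:ℝ) 1 <;> by_cases h2 : t ∈ Icc (2:ℝ) 3 <;>
    simp [fdens, indicator, h1, h2]
  · exact absurd (h1.2.trans_lt (by linarith [h2.1])) (lt_irrefl _)

lemma meas_eq (p : ℝ) {s : Set ℝ} (hs : MeasurableSet s) :
    μmix p s = ENNReal.ofReal p * volume (s ∩ Icc (0:ℝ) 1)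
      + ENNReal.ofReal (1-p) * volume (s ∩ Icc (2:ℝ) 3) := by
  rw [μmix, withDensity_apply _ hs]
  simp only [fdens_ofReal]
  rw [lintegral_add_left (by measurability)]
  rw [lintegral_indicator_const (by measurability), lintegral_indicator_const (by measurability)]
  simp [Measure.restrict_apply (by measurability : MeasurableSet (Icc (0:ℝ) 1)),
    Measure.restrict_apply (by measurability : MeasurableSet (Icc (2:ℝ) 3)), inter_comm]

lemma vol_Icc_inter (a b c d : ℝ) :
    volume (Icc a b ∩ Icc c d) = ENNReal.ofReal (min b d - max a c) := by
  rw [Icc_inter_Icc, Real.volume_Icc]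

lemma int_eq (p : ℝ) (hp0 : 0 ≤ p) (hp1 : p ≤ 1) (a b : ℝ) :
    ∫ x in Icc a b, x ∂μmix p
      = p * (∫ x in Icc a b ∩ Icc (0:ℝ) 1, x) + (1-p) * ∫ x in Icc a b ∩ Icc (2:ℝ) 3, x := by
  have hμ : μmix p = volume.withDensity (fun t => ((fdens p t).toNNReal : ℝ≥0∞)) := by
    simp [μmix, ENNReal.ofReal]
  have hmeas : Measurable fun t => (fdens p t).toNNReal := by
    apply Measurable.real_toNNReal
    unfold fdens
    measurability
  rw [hμ, setIntegral_withDensity_eq_setIntegral_smul hmeas (fun x => x) measurableSet_Icc]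
  have hptw : ∀ x : ℝ, (fdens p x).toNNReal • x
      = (Icc (0:ℝ) 1).indicator (fun y => p * y) x
        + (Icc (2:ℝ) 3).indicator (fun y => (1-p) * y) x := by
    intro x
    have hnn : 0 ≤ fdens p x := by
      unfold fdens
      by_cases h1 : x ∈ Icc (0:ℝ) 1 <;> by_cases h2 : x ∈ Icc (2:ℝ) 3 <;>
        simp [indicator, h1, h2] <;> linarith
    rw [NNReal.smul_def, Real.coe_toNNReal _ hnn]
    by_cases h1 : x ∈ Icc (0:ℝ) 1 <;> by_cases h2 : x ∈ Icc (2:ℝ) 3 <;>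
      simp [fdens, indicator, h1, h2] <;> ring
  simp only [hptw]
  have hi1 : IntegrableOn (fun y => p * y) (Icc a b) volume :=
    (continuous_const.mul continuous_id).integrableOn_Icc
  have hi2 : IntegrableOn (fun y => (1-p) * y) (Icc a b) volume :=
    (continuous_const.mul continuous_id).integrableOn_Icc
  rw [integral_add (hi1.indicator measurableSet_Icc) (hi2.indicator measurableSet_Icc),
    setIntegral_indicator measurableSet_Icc, setIntegral_indicator measurableSet_Icc]
  have e1 : ∫ x in Icc a b ∩ Icc (0:ℝ) 1, p * x = p * ∫ x in Icc a b ∩ Icc (0:ℝ) 1, x :=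
    integral_const_mul p _
  have e2 : ∫ x in Icc a b ∩ Icc (2:ℝ) 3, (1-p) * x
      = (1-p) * ∫ x in Icc a b ∩ Icc (2:ℝ) 3, x := integral_const_mul (1-p) _
  rw [e1, e2]

lemma vol_ne_top (a b c d : ℝ) : volume (Icc a b ∩ Icc c d) ≠ ⊤ := by
  rw [vol_Icc_inter]; exact ENNReal.ofReal_ne_top

theorem stmt_18 :
    ∀ ε ∈ Ioo (0 : ℝ) 1, ∀ p ∈ Ioo (0 : ℝ) 1, ∀ q ∈ Ioo (0 : ℝ) 1,
      (∀ a b : ℝ, 0 < b - a → b - a < ε →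
        ((0 < μmix p (Icc a b) ↔ 0 < μmix q (Icc a b)) ∧
          (0 < μmix p (Icc a b) → 0 < μmix q (Icc a b) →
            (∫ x in Icc a b, x ∂μmix p) / (μmix p (Icc a b)).toReal
              = (∫ x in Icc a b, x ∂μmix q) / (μmix q (Icc a b)).toReal)))
      ∧ (p ≠ q → μmix p ≠ μmix q) := by
  rintro ε ⟨hε0, hε1⟩ p ⟨hp0, hp1⟩ q ⟨hq0, hq1⟩
  constructor
  · intro a b hab habε
    have hmp := meas_eq p (measurableSet_Icc (a := a) (b := b))
    have hmq := meas_eq q (measurableSet_Icc (a := a) (b := b))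
    rw [hmp, hmq, int_eq p hp0.le hp1.le, int_eq q hq0.le hq1.le]
    set A := volume (Icc a b ∩ Icc (0:ℝ) 1) with hA
    set B := volume (Icc a b ∩ Icc (2:ℝ) 3) with hB
    have hpos : ∀ r : ℝ, 0 < r → r < 1 →
        (0 < ENNReal.ofReal r * A + ENNReal.ofReal (1-r) * B ↔ ¬(A = 0 ∧ B = 0)) := by
      intro r hr0 hr1
      rw [pos_iff_ne_zero, Ne, add_eq_zero, mul_eq_zero, mul_eq_zero,
        ENNReal.ofReal_eq_zero, ENNReal.ofReal_eq_zero]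
      constructor
      · intro h hc; exact h ⟨Or.inr hc.1, Or.inr hc.2⟩
      · rintro h ⟨h1 | h1, h2 | h2⟩ <;> first
          | linarith
          | exact h ⟨h1, h2⟩
          | linarith [h.elim]
    have hexcl : ¬(A ≠ 0 ∧ B ≠ 0) := by
      rintro ⟨h1, h2⟩
      rw [hA, vol_Icc_inter, Ne, ENNReal.ofReal_eq_zero, not_le] at h1
      rw [hB, vol_Icc_inter, Ne, ENNReal.ofReal_eq_zero, not_le] at h2
      have := le_max_left a (0:ℝ)
      have := min_le_right b (1:ℝ)
      have := le_max_right a (2:ℝ)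
      have := min_le_left b (3:ℝ)
      linarith
    constructor
    · rw [hpos p hp0 hp1, hpos q hq0 hq1]
    · intro hPp hPq
      rw [hpos p hp0 hp1] at hPp
      by_cases hA0 : A = 0
      · have hB0 : B ≠ 0 := fun hB0 => hPp ⟨hA0, hB0⟩
        have hI1 : (∫ x in Icc a b ∩ Icc (0:ℝ) 1, x) = 0 := by
          rw [Measure.restrict_eq_zero.mpr (hA ▸ hA0 : volume (Icc a b ∩ Icc (0:ℝ) 1) = 0),
            integral_zero_measure]
        rw [hA0, hI1]
        simp only [mul_zero, zero_add]
        rw [ENNReal.toReal_mul, ENNReal.toReal_mul,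
          ENNReal.toReal_ofReal (by linarith), ENNReal.toReal_ofReal (by linarith)]
        rw [mul_div_mul_left _ _ (by linarith : (1:ℝ)-p ≠ 0),
          mul_div_mul_left _ _ (by linarith : (1:ℝ)-q ≠ 0)]
      · have hB0 : B = 0 := by
          by_contra hB0; exact hexcl ⟨hA0, hB0⟩
        have hI2 : (∫ x in Icc a b ∩ Icc (2:ℝ) 3, x) = 0 := by
          rw [Measure.restrict_eq_zero.mpr (hB ▸ hB0 : volume (Icc a b ∩ Icc (2:ℝ) 3) = 0),
            integral_zero_measure]
        rw [hB0, hI2]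
        simp only [mul_zero, add_zero]
        rw [ENNReal.toReal_mul, ENNReal.toReal_mul,
          ENNReal.toReal_ofReal hp0.le, ENNReal.toReal_ofReal hq0.le]
        rw [mul_div_mul_left _ _ (ne_of_gt hp0), mul_div_mul_left _ _ (ne_of_gt hq0)]
  · intro hpq h
    apply hpq
    have h1 : μmix p (Icc (0:ℝ) 1) = μmix q (Icc (0:ℝ) 1) := by rw [h]
    rw [meas_eq p measurableSet_Icc, meas_eq q measurableSet_Icc] at h1
    have e1 : volume (Icc (0:ℝ) 1 ∩ Icc (0:ℝ) 1) = 1 := by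
      rw [vol_Icc_inter]; norm_num
    have e2 : volume (Icc (0:ℝ) 1 ∩ Icc (2:ℝ) 3) = 0 := by
      rw [vol_Icc_inter]; norm_num
    rw [e1, e2, mul_one, mul_zero, add_zero, mul_one, mul_zero, add_zero] at h1
    exact (ENNReal.ofReal_eq_ofReal_iff hp0.le hq0.le).mp h1
end
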